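/- arXiv:2006.04313 — 14 statements merged into one kernel-verified Lean document; each statement's English description precedes it below -/
import Mathlib

section
/- Let E be a finite set and f : 2^E → ℝ a submodular set function with multilinear extension F. Then F is concave along nonnegative directions: for every y ∈ [0,1]^E, every pair of distinct elements e_1, e_2 ∈ E, and every δ_1, δ_2 ≥ 0 such that y + δ_1·1_{e_1} + δ_2·1_{e_2} ∈ [0,1]^E, one has F(y + δ_1 1_{e_1} + δ_2 1_{e_2}) − F(y + δ_1 1_{e_1}) − F(y + δ_2 1_{e_2}) + F(y) ≤ 0. -/
private lemma prod_split_aux {α : Type*} [DecidableEq α] (a : α) (s : Finset α) (g : α → ℝ) :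
    ∏ e ∈ s, g e = (if a ∈ s then g a else 1) * ∏ e ∈ s.erase a, g e := by
  by_cases h : a ∈ s
  · simp only [h, if_true]
    exact (Finset.mul_prod_erase s g h).symm
  · simp [h, Finset.erase_eq_of_notMem h]

private lemma prod_factor_aux {α : Type*} [Fintype α] [DecidableEq α]
    (e₁ e₂ : α) (hne : e₁ ≠ e₂) (S : Finset α) (z : α → ℝ) :
    (∏ e ∈ S, z e) * ∏ e ∈ Sᶜ, (1 - z e)
      = ((if e₁ ∈ S then z e₁ else 1 - z e₁) * (if e₂ ∈ S then z e₂ else 1 - z e₂))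
        * ((∏ e ∈ (S.erase e₁).erase e₂, z e) * ∏ e ∈ ((Sᶜ).erase e₁).erase e₂, (1 - z e)) := by
  rw [prod_split_aux e₁ S z, prod_split_aux e₂ (S.erase e₁) z,
      prod_split_aux e₁ Sᶜ (fun e => 1 - z e), prod_split_aux e₂ (Sᶜ.erase e₁) (fun e => 1 - z e)]
  have m1 : e₂ ∈ S.erase e₁ ↔ e₂ ∈ S := by simp [Finset.mem_erase, hne.symm]
  have m2 : e₁ ∈ Sᶜ ↔ ¬ e₁ ∈ S := Finset.mem_compl
  have m3 : e₂ ∈ Sᶜ.erase e₁ ↔ ¬ e₂ ∈ S := by simp [Finset.mem_erase, hne.symm]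
  by_cases h1 : e₁ ∈ S <;> by_cases h2 : e₂ ∈ S <;>
    simp only [m1, m2, m3, h1, h2, if_true, if_false, not_true, not_false_iff] <;> ring

/-- The multilinear extension of a submodular set function is concave
along nonnegative directions: the second difference along two distinct coordinates is
nonpositive. -/
theorem multilinear_extension_concave_along_nonneg_directions
    {α : Type*} [Fintype α] [DecidableEq α]
    (f : Finset α → ℝ)
    (hsub : ∀ (A B : Finset α) (e : α), A ⊆ B → e ∉ B →
      f (insert e B) - f B ≤ f (insert e A) - f A)
    (F : (α → ℝ) → ℝ)
    (hF : ∀ z : α → ℝ,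
      F z = ∑ S : Finset α, f S * ((∏ e ∈ S, z e) * ∏ e ∈ Sᶜ, (1 - z e)))
    (y : α → ℝ) (hy : ∀ e, y e ∈ Set.Icc (0 : ℝ) 1)
    (e₁ e₂ : α) (hne : e₁ ≠ e₂)
    (δ₁ δ₂ : ℝ) (hδ₁ : 0 ≤ δ₁) (hδ₂ : 0 ≤ δ₂)
    (htop : ∀ e,
      (y e + (if e = e₁ then δ₁ else 0) + (if e = e₂ then δ₂ else 0)) ∈ Set.Icc (0 : ℝ) 1) :
    F (fun e => y e + (if e = e₁ then δ₁ else 0) + (if e = e₂ then δ₂ else 0))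
      - F (fun e => y e + (if e = e₁ then δ₁ else 0))
      - F (fun e => y e + (if e = e₂ then δ₂ else 0))
      + F y ≤ 0 := by
  classical
  -- notation
  set R : Finset α → ℝ := fun S =>
    (∏ e ∈ (S.erase e₁).erase e₂, y e) * ∏ e ∈ ((Sᶜ).erase e₁).erase e₂, (1 - y e) with hR
  set g : Finset α → ℝ := fun S =>
    (if e₁ ∈ S then (1:ℝ) else -1) * (if e₂ ∈ S then (1:ℝ) else -1) * (f S * R S) with hg
  rw [hF, hF, hF, hF]
  rw [← Finset.sum_sub_distrib, ← Finset.sum_sub_distrib, ← Finset.sum_add_distrib]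
  have key : ∀ S : Finset α,
      (f S * ((∏ e ∈ S, (fun e => y e + (if e = e₁ then δ₁ else 0) + (if e = e₂ then δ₂ else 0)) e)
          * ∏ e ∈ Sᶜ, (1 - (fun e => y e + (if e = e₁ then δ₁ else 0) + (if e = e₂ then δ₂ else 0)) e))
        - f S * ((∏ e ∈ S, (fun e => y e + (if e = e₁ then δ₁ else 0)) e)
          * ∏ e ∈ Sᶜ, (1 - (fun e => y e + (if e = e₁ then δ₁ else 0)) e))
        - f S * ((∏ e ∈ S, (fun e => y e + (if e = e₂ then δ₂ else 0)) e)
          * ∏ e ∈ Sᶜ, (1 - (fun e => y e + (if e = e₂ then δ₂ else 0)) e))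
        + f S * ((∏ e ∈ S, y e) * ∏ e ∈ Sᶜ, (1 - y e)))
      = δ₁ * δ₂ * g S := by
    intro S
    have hw := prod_factor_aux e₁ e₂ hne S
      (fun e => y e + (if e = e₁ then δ₁ else 0) + (if e = e₂ then δ₂ else 0))
    have hu := prod_factor_aux e₁ e₂ hne S (fun e => y e + (if e = e₁ then δ₁ else 0))
    have hv := prod_factor_aux e₁ e₂ hne S (fun e => y e + (if e = e₂ then δ₂ else 0))
    have hy0 := prod_factor_aux e₁ e₂ hne S y
    -- off the two coordinates, all four points agree with y
    have hoff : ∀ (z : α → ℝ), (∀ e, e ≠ e₁ → e ≠ e₂ → z e = y e) →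
        (∏ e ∈ (S.erase e₁).erase e₂, z e) = ∏ e ∈ (S.erase e₁).erase e₂, y e ∧
        (∏ e ∈ ((Sᶜ).erase e₁).erase e₂, (1 - z e)) = ∏ e ∈ ((Sᶜ).erase e₁).erase e₂, (1 - y e) := by
      intro z hz
      constructor <;> refine Finset.prod_congr rfl (fun e he => ?_) <;>
        · simp only [Finset.mem_erase] at he
          rw [hz e he.2.1 he.1]
    have h1 := hoff (fun e => y e + (if e = e₁ then δ₁ else 0) + (if e = e₂ then δ₂ else 0))
      (by intro e h1 h2; simp [h1, h2])
    have h2 := hoff (fun e => y e + (if e = e₁ then δ₁ else 0)) (by intro e h1 _; simp [h1])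
    have h3 := hoff (fun e => y e + (if e = e₂ then δ₂ else 0)) (by intro e _ h2; simp [h2])
    rw [h1.1, h1.2] at hw
    rw [h2.1, h2.2] at hu
    rw [h3.1, h3.2] at hv
    rw [hw, hu, hv, hy0, hg, hR]
    simp only [if_pos rfl, if_neg hne, if_neg hne.symm, add_zero]
    by_cases hm1 : e₁ ∈ S <;> by_cases hm2 : e₂ ∈ S <;>
      simp only [hm1, hm2, if_true, if_false] <;> ring
  rw [Finset.sum_congr rfl (fun S _ => key S), ← Finset.mul_sum]
  have hsum : (∑ S : Finset α, g S) ≤ 0 := by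
    have hc2 : e₂ ∉ ((Finset.univ : Finset α).erase e₁).erase e₂ := Finset.notMem_erase _ _
    have hc1 : e₁ ∉ insert e₂ (((Finset.univ : Finset α).erase e₁).erase e₂) := by
      simp [hne, Finset.mem_erase]
    have huniv : insert e₁ (insert e₂ (((Finset.univ : Finset α).erase e₁).erase e₂))
        = (Finset.univ : Finset α) := by
      rw [Finset.insert_erase (Finset.mem_erase.2 ⟨hne.symm, Finset.mem_univ _⟩),
          Finset.insert_erase (Finset.mem_univ _)]
    calc (∑ S : Finset α, g S)
        = ∑ S ∈ (insert e₁ (insert e₂ (((Finset.univ : Finset α).erase e₁).erase e₂))).powerset,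
            g S := by rw [huniv, Finset.powerset_univ]
      _ = ∑ S ∈ (((Finset.univ : Finset α).erase e₁).erase e₂).powerset,
            (g S + g (insert e₂ S) + (g (insert e₁ S) + g (insert e₁ (insert e₂ S)))) := by
          rw [Finset.sum_powerset_insert hc1, Finset.sum_powerset_insert hc2,
              Finset.sum_powerset_insert hc2, ← Finset.sum_add_distrib,
              ← Finset.sum_add_distrib, ← Finset.sum_add_distrib]
      _ ≤ 0 := by
          apply Finset.sum_nonpos
          intro S hS
          rw [Finset.mem_powerset] at hS
          have he1 : e₁ ∉ S := fun h => (Finset.mem_erase.1 (Finset.mem_erase.1 (hS h)).2).1 rfl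
          have he2 : e₂ ∉ S := fun h => (Finset.mem_erase.1 (hS h)).1 rfl
          have he1' : e₁ ∉ insert e₂ S := by simp [hne, he1]
          have he2' : e₂ ∉ insert e₁ S := by simp [hne.symm, he2]
          -- common nonnegative weight
          have hRval : ∀ T ∈ [S, insert e₂ S, insert e₁ S, insert e₁ (insert e₂ S)].toFinset,
              True := by simp
          -- compute R on the four sets
          have r0 : R S = (∏ e ∈ S, y e) * ∏ e ∈ (((Sᶜ)).erase e₁).erase e₂, (1 - y e) := by
            rw [hR]
            simp only [Finset.erase_eq_of_notMem he1, Finset.erase_eq_of_notMem he2]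
          have r2 : R (insert e₂ S)
              = (∏ e ∈ S, y e) * ∏ e ∈ (((Sᶜ)).erase e₁).erase e₂, (1 - y e) := by
            rw [hR]
            simp only [Finset.erase_eq_of_notMem he1', Finset.erase_insert he2,
              Finset.compl_insert]
            rw [Finset.erase_right_comm (a := e₂) (b := e₁), Finset.erase_idem]
          have r1 : R (insert e₁ S)
              = (∏ e ∈ S, y e) * ∏ e ∈ (((Sᶜ)).erase e₁).erase e₂, (1 - y e) := by
            rw [hR]
            simp only [Finset.erase_insert he1, Finset.erase_eq_of_notMem he2,
              Finset.compl_insert, Finset.erase_idem]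
          have r12 : R (insert e₁ (insert e₂ S))
              = (∏ e ∈ S, y e) * ∏ e ∈ (((Sᶜ)).erase e₁).erase e₂, (1 - y e) := by
            simp only [hR]
            rw [Finset.erase_insert he1', Finset.erase_insert he2, Finset.compl_insert,
              Finset.compl_insert, Finset.erase_idem,
              Finset.erase_right_comm (a := e₂) (b := e₁), Finset.erase_idem]
          have hRnn : 0 ≤ (∏ e ∈ S, y e) * ∏ e ∈ (((Sᶜ)).erase e₁).erase e₂, (1 - y e) := by
            apply mul_nonneg
            · exact Finset.prod_nonneg fun e _ => (hy e).1
            · exact Finset.prod_nonneg fun e _ => by linarith [(hy e).2]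
          have hmono := hsub S (insert e₂ S) e₁ (Finset.subset_insert _ _) he1'
          have hval : g S + g (insert e₂ S) + (g (insert e₁ S) + g (insert e₁ (insert e₂ S)))
              = (f S - f (insert e₂ S) - f (insert e₁ S) + f (insert e₁ (insert e₂ S)))
                * ((∏ e ∈ S, y e) * ∏ e ∈ (((Sᶜ)).erase e₁).erase e₂, (1 - y e)) := by
            simp only [hg, r0, r1, r2, r12, if_neg he1, if_neg he2, if_neg he1', if_neg he2',
              if_pos (Finset.mem_insert_self e₁ (insert e₂ S)),
              if_pos (Finset.mem_insert_self e₁ S), if_pos (Finset.mem_insert_self e₂ S),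
              if_pos (Finset.mem_insert_of_mem (Finset.mem_insert_self e₂ S))]
            ring
          rw [hval]
          apply mul_nonpos_of_nonpos_of_nonneg _ hRnn
          linarith
  calc δ₁ * δ₂ * ∑ S : Finset α, g S ≤ δ₁ * δ₂ * 0 := by
        apply mul_le_mul_of_nonneg_left hsum (mul_nonneg hδ₁ hδ₂)
    _ = 0 := by ring
end

section
/- For every finite index set I and every x ∈ [0,1]^I: (1 − 1/e)·min{1, Σ_{i∈I} x_i} ≤ 1 − ∏_{i∈I}(1 − x_i) ≤ min{1, Σ_{i∈I} x_i}. -/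
private lemma weier {ι : Type*} (I : Finset ι) (x : ι → ℝ)
    (hx : ∀ i ∈ I, x i ∈ Set.Icc (0 : ℝ) 1) :
    1 - ∑ i ∈ I, x i ≤ ∏ i ∈ I, (1 - x i) := by
  classical
  induction I using Finset.induction with
  | empty => simp
  | @insert a s ha ih =>
    have hxa := hx a (Finset.mem_insert_self a s)
    have hs : ∀ i ∈ s, x i ∈ Set.Icc (0 : ℝ) 1 :=
      fun i hi => hx i (Finset.mem_insert_of_mem hi)
    have ih' := ih hs
    have hsum : 0 ≤ ∑ i ∈ s, x i := Finset.sum_nonneg fun i hi => (hs i hi).1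
    rw [Finset.sum_insert ha, Finset.prod_insert ha]
    nlinarith [hxa.1, hxa.2]

/-- For `x ∈ [0,1]^I`,
`(1 − 1/e)·min{1, ∑ x_i} ≤ 1 − ∏ (1 − x_i) ≤ min{1, ∑ x_i}`. -/
theorem biconjugate_bounds {ι : Type*} (I : Finset ι) (x : ι → ℝ)
    (hx : ∀ i ∈ I, x i ∈ Set.Icc (0 : ℝ) 1) :
    (1 - (Real.exp 1)⁻¹) * min 1 (∑ i ∈ I, x i) ≤ 1 - ∏ i ∈ I, (1 - x i) ∧
      1 - ∏ i ∈ I, (1 - x i) ≤ min 1 (∑ i ∈ I, x i) := by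
  set S := ∑ i ∈ I, x i with hSdef
  have hS : 0 ≤ S := Finset.sum_nonneg fun i hi => (hx i hi).1
  have hprod0 : 0 ≤ ∏ i ∈ I, (1 - x i) :=
    Finset.prod_nonneg fun i hi => by linarith [(hx i hi).2]
  have hw := weier I x hx
  have hexp : ∏ i ∈ I, (1 - x i) ≤ Real.exp (-S) := by
    have h1 : ∏ i ∈ I, (1 - x i) ≤ ∏ i ∈ I, Real.exp (-(x i)) := by
      apply Finset.prod_le_prod
      · intro i hi; linarith [(hx i hi).2]
      · intro i hi; linarith [Real.add_one_le_exp (-(x i))]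
    have h2 : ∏ i ∈ I, Real.exp (-(x i)) = Real.exp (-S) := by
      rw [← Real.exp_sum, hSdef, ← Finset.sum_neg_distrib]
    linarith [h1, h2.le, h2.ge]
  constructor
  · rcases le_total S 1 with h1 | h1
    · rw [min_eq_right h1]
      have hc := convexOn_exp.2 (Set.mem_univ (-1:ℝ)) (Set.mem_univ (0:ℝ))
        hS (by linarith : (0:ℝ) ≤ 1 - S) (by ring)
      simp only [smul_eq_mul, mul_zero, add_zero, Real.exp_zero, mul_one] at hc
      rw [show S * (-1) = -S by ring, Real.exp_neg 1] at hc
      calc (1 - (Real.exp 1)⁻¹) * S ≤ 1 - Real.exp (-S) := by linarith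
        _ ≤ 1 - ∏ i ∈ I, (1 - x i) := by linarith
    · rw [min_eq_left h1]
      have : Real.exp (-S) ≤ Real.exp (-1) := Real.exp_le_exp.2 (by linarith)
      have h2 : Real.exp (-1) = (Real.exp 1)⁻¹ := Real.exp_neg 1
      linarith
  · exact le_min (by linarith) (by linarith)
end

section
/- Let E be a finite set and f : 2^E → ℝ≥0 a nonnegative submodular function (not necessarily monotone). Let B be the random subset of E obtained by including each element of E independently with probability 1/2. Then E[f(B)] ≥ f(E)/2. -/
lemma submod_union_aux {α : Type*} [DecidableEq α] (f : Finset α → ℝ)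
    (hsub : ∀ (A B : Finset α) (e : α), A ⊆ B → e ∉ B →
      f (insert e B) - f B ≤ f (insert e A) - f A) :
    ∀ (A B : Finset α), Disjoint A B → f (A ∪ B) - f B ≤ f A - f ∅ := by
  intro A
  induction A using Finset.induction_on with
  | empty => intro B _; simp
  | insert e A' heA ih =>
    intro B hd
    have heB : e ∉ B := by
      have := Finset.disjoint_left.mp hd (Finset.mem_insert_self e A')
      exact this
    have hd' : Disjoint A' B := by
      refine Finset.disjoint_left.mpr ?_
      intro x hx
      exact Finset.disjoint_left.mp hd (Finset.mem_insert_of_mem hx)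
    have h1 : f (insert e (A' ∪ B)) - f (A' ∪ B) ≤ f (insert e A') - f A' := by
      apply hsub A' (A' ∪ B) e Finset.subset_union_left
      simp [heA, heB]
    have h2 := ih B hd'
    have : insert e A' ∪ B = insert e (A' ∪ B) := by
      simp [Finset.insert_union]
    rw [this]
    linarith

/-- For a nonnegative submodular function `f` on a finite ground set,
the expected value of `f` at a uniformly random subset (each element included
independently with probability `1/2`) is at least `f(E)/2`. -/
theorem expected_value_uniform_random_subset {α : Type*} [Fintype α] [DecidableEq α]
    (f : Finset α → ℝ)
    (hnn : ∀ A : Finset α, 0 ≤ f A)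
    (hsub : ∀ (A B : Finset α) (e : α), A ⊆ B → e ∉ B →
      f (insert e B) - f B ≤ f (insert e A) - f A) :
    f Finset.univ / 2 ≤ (∑ S : Finset α, f S) / 2 ^ Fintype.card α := by
  have key : ∀ S : Finset α, f Finset.univ ≤ f S + f Sᶜ := by
    intro S
    have := submod_union_aux f hsub S Sᶜ (disjoint_compl_right)
    rw [Finset.union_compl] at this
    have h0 := hnn (∅ : Finset α)
    linarith
  have hcompl : ∑ S : Finset α, f Sᶜ = ∑ S : Finset α, f S := by
    exact Fintype.sum_equiv ((Function.Involutive.toPerm compl (fun S => compl_compl S))) _ _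
      (fun S => rfl)
  have hsum : (2 : ℝ) ^ Fintype.card α * f Finset.univ ≤ 2 * ∑ S : Finset α, f S := by
    have h1 : ∑ _S : Finset α, f Finset.univ ≤ ∑ S : Finset α, (f S + f Sᶜ) :=
      Finset.sum_le_sum (fun S _ => key S)
    rw [Finset.sum_const, Finset.card_univ, Fintype.card_finset] at h1
    rw [Finset.sum_add_distrib, hcompl] at h1
    rw [nsmul_eq_mul] at h1; push_cast at h1
    linarith
  rw [div_le_div_iff₀ (by norm_num) (by positivity)]
  linarith
end

section
/- Let A be a finite set and f : 2^A → ℝ≥0 a monotone submodular function. Let R be the random subset of A obtained by including each element i ∈ A independently with probability p_i, where p_i ≥ 1/2 for every i ∈ A. Then E[f(R)] ≥ f(A)/2. -/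
/-- For a nonnegative monotone submodular function `f` on a finite
ground set `A` and a random subset `R` including each element `i` independently with
probability `p i ≥ 1/2`, one has `E[f(R)] ≥ f(A)/2`. -/
theorem expected_value_random_subset_half {α : Type*} [Fintype α] [DecidableEq α]
    (f : Finset α → ℝ)
    (hnn : ∀ S : Finset α, 0 ≤ f S)
    (hmono : ∀ S T : Finset α, S ⊆ T → f S ≤ f T)
    (hsub : ∀ (S T : Finset α) (e : α), S ⊆ T → e ∉ T →
      f (insert e T) - f T ≤ f (insert e S) - f S)
    (p : α → ℝ) (hp : ∀ i, 1 / 2 ≤ p i) (hp1 : ∀ i, p i ≤ 1) :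
    f Finset.univ / 2 ≤
      ∑ S : Finset α, f S * ((∏ i ∈ S, p i) * ∏ i ∈ Sᶜ, (1 - p i)) := by
  classical
  set n := Fintype.card α with hn
  -- subadditivity: f (S ∪ T) ≤ f S + f T
  have hsubadd : ∀ S T : Finset α, f (S ∪ T) ≤ f S + f T := by
    intro S T
    induction T using Finset.induction_on with
    | empty =>
      simp only [Finset.union_empty]
      linarith [hnn ∅]
    | @insert e T he ih =>
      rw [Finset.union_insert]
      by_cases heS : e ∈ S ∪ T
      · rw [Finset.insert_eq_self.2 heS]
        exact ih.trans (by linarith [hmono T (insert e T) (Finset.subset_insert e T)])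
      · have h1 := hsub T (S ∪ T) e Finset.subset_union_right heS
        linarith
  -- the multilinear extension
  set F : (α → ℝ) → ℝ :=
    fun q => ∑ S : Finset α, f S * ((∏ i ∈ S, q i) * ∏ i ∈ Sᶜ, (1 - q i)) with hF
  -- coordinate monotonicity: replacing a coordinate `≥ 1/2` by `1/2` decreases F
  have L1 : ∀ (q : α → ℝ), (∀ j, 0 ≤ q j) → (∀ j, q j ≤ 1) → ∀ i, 1 / 2 ≤ q i →
      F (Function.update q i (1 / 2)) ≤ F q := by
    intro q hq0 hq1 i hqi
    set q' := Function.update q i (1 / 2 : ℝ) with hq'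
    have split : ∀ r : α → ℝ,
        F r = ∑ S ∈ (Finset.univ.erase i).powerset,
          (f S * ((∏ j ∈ S, r j) * ∏ j ∈ Sᶜ, (1 - r j))
            + f (insert i S) * ((∏ j ∈ insert i S, r j) * ∏ j ∈ (insert i S)ᶜ, (1 - r j))) := by
      intro r
      simp only [hF]
      rw [show (Finset.univ : Finset (Finset α))
            = (insert i (Finset.univ.erase i)).powerset by
          rw [Finset.insert_erase (Finset.mem_univ i), Finset.powerset_univ]]
      rw [Finset.sum_powerset_insert (Finset.notMem_erase i _), Finset.sum_add_distrib]
    rw [split q, split q']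
    apply Finset.sum_le_sum
    intro S hS
    have hiS : i ∉ S := fun h =>
      Finset.notMem_erase i Finset.univ (Finset.mem_powerset.1 hS h)
    have hiSc : i ∈ Sᶜ := Finset.mem_compl.2 hiS
    set P := ∏ j ∈ S, q j with hP
    set Q := ∏ j ∈ Sᶜ.erase i, (1 - q j) with hQ
    have hP0 : 0 ≤ P := Finset.prod_nonneg fun j _ => hq0 j
    have hQ0 : 0 ≤ Q := Finset.prod_nonneg fun j _ => by linarith [hq1 j]
    have e1 : ∀ r : α → ℝ, (∀ j, j ≠ i → r j = q j) →
        f S * ((∏ j ∈ S, r j) * ∏ j ∈ Sᶜ, (1 - r j))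
          + f (insert i S) * ((∏ j ∈ insert i S, r j) * ∏ j ∈ (insert i S)ᶜ, (1 - r j))
        = f S * (P * ((1 - r i) * Q)) + f (insert i S) * ((r i * P) * Q) := by
      intro r hr
      have hPr : ∏ j ∈ S, r j = P :=
        Finset.prod_congr rfl fun j hj => hr j (fun h => hiS (h ▸ hj))
      have hQr : ∏ j ∈ Sᶜ.erase i, (1 - r j) = Q :=
        Finset.prod_congr rfl fun j hj => by
          rw [hr j (Finset.ne_of_mem_erase hj)]
      rw [Finset.prod_insert hiS, Finset.compl_insert,
        ← Finset.mul_prod_erase Sᶜ _ hiSc, hPr, hQr]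
    rw [e1 q (fun _ _ => rfl), e1 q' (fun j hj => Function.update_of_ne hj _ _)]
    have hq'i : q' i = 1 / 2 := Function.update_self i _ q
    rw [hq'i]
    have hmon : f S ≤ f (insert i S) := hmono S (insert i S) (Finset.subset_insert i S)
    nlinarith [mul_nonneg (mul_nonneg hP0 hQ0) (mul_nonneg (by linarith : (0:ℝ) ≤ q i - 1/2) (by linarith : (0:ℝ) ≤ f (insert i S) - f S))]
  -- induction: F (all coords in U replaced by 1/2) ≤ F p
  have key : ∀ U : Finset α,
      F (fun j => if j ∈ U then (1 / 2 : ℝ) else p j) ≤ F p := by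
    intro U
    induction U using Finset.induction_on with
    | empty => simp
    | @insert a U ha ih =>
      have heq : (fun j => if j ∈ insert a U then (1 / 2 : ℝ) else p j)
          = Function.update (fun j => if j ∈ U then (1 / 2 : ℝ) else p j) a (1 / 2) := by
        funext j
        by_cases hja : j = a
        · subst hja; simp
        · simp [Function.update_of_ne hja, hja]
      rw [heq]
      refine (L1 _ (fun j => ?_) (fun j => ?_) a ?_).trans ih
      · split <;> [norm_num; linarith [hp j]]
      · split <;> [norm_num; exact hp1 j]
      · split <;> [norm_num; exact hp a]
  have keyU := key Finset.univ
  simp only [Finset.mem_univ, if_true] at keyU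
  -- value at the all-1/2 point
  have hval : F (fun _ => (1 / 2 : ℝ)) = (1 / 2) ^ n * ∑ S : Finset α, f S := by
    rw [hF, Finset.mul_sum]
    refine Finset.sum_congr rfl fun S _ => ?_
    rw [Finset.prod_const, Finset.prod_const]
    norm_num
    rw [← pow_add, Finset.card_add_card_compl]
    ring
  -- 2^n * f univ ≤ 2 * ∑ f S
  have hcs : ∑ S : Finset α, f Sᶜ = ∑ S : Finset α, f S :=
    Fintype.sum_bijective compl (Function.Involutive.bijective compl_compl)
      (fun S => f Sᶜ) f (fun S => rfl)
  have hbig : (2 : ℝ) ^ n * f Finset.univ ≤ 2 * ∑ S : Finset α, f S := by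
    have h1 : ∀ S : Finset α, f Finset.univ ≤ f S + f Sᶜ := fun S => by
      have := hsubadd S Sᶜ
      rwa [Finset.union_compl] at this
    calc (2 : ℝ) ^ n * f Finset.univ
        = ∑ _S : Finset α, f Finset.univ := by
          rw [Finset.sum_const, Finset.card_univ, Fintype.card_finset, nsmul_eq_mul]
          push_cast; ring
      _ ≤ ∑ S : Finset α, (f S + f Sᶜ) := Finset.sum_le_sum fun S _ => h1 S
      _ = 2 * ∑ S : Finset α, f S := by rw [Finset.sum_add_distrib, hcs]; ring
  -- conclude
  have h2n : (0 : ℝ) < 2 ^ n := by positivity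
  have : f Finset.univ / 2 ≤ F (fun _ => (1 / 2 : ℝ)) := by
    rw [hval, div_pow, one_pow, div_mul_eq_mul_div, div_le_div_iff₀ two_pos h2n]
    linarith
  exact this.trans keyU
end

section
/- In the two-sided sequential matching model, assume every consumer is easy-to-match, i.e., p_i(j,{j}) ≥ 1/2 for all i ∈ N and j ∈ V, and assume every demand function Q_j : 2^N → [0,1] is monotone, submodular, and satisfies Q_j(∅) = 0. Let (A_1,…,A_m) be a tuple of pairwise disjoint (possibly empty) subsets of N whose union is N, and let S be the assortment family with S_i = {j} for every i ∈ A_j. Then E[M_S] ≥ (1/2)·Σ_{j∈V} r_j Q_j(A_j). -/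
/-- Expected revenue of the matching when the assortment family is `S`:
`E[M_S] = ∑_j r_j · E[Q_j(A_j^S)]`, where consumer `i` independently selects supplier `j`
with probability `pc i j (S i)`, so that `E[Q_j(A_j^S)]` is the multilinear extension of
`Q j` evaluated at the choice probabilities. -/
def expRev {ι κ : Type*} [Fintype ι] [Fintype κ] [DecidableEq ι]
    (pc : ι → κ → Finset κ → ℝ) (Q : κ → Finset ι → ℝ) (r : κ → ℝ)
    (S : ι → Finset κ) : ℝ :=
  ∑ j : κ, r j * ∑ A : Finset ι,
    Q j A * ((∏ i ∈ A, pc i j (S i)) * ∏ i ∈ Aᶜ, (1 - pc i j (S i)))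


open Finset

def mext {ι : Type*} [DecidableEq ι] (p : ι → ℝ) (Q : Finset ι → ℝ) (A : Finset ι) : ℝ :=
  ∑ B ∈ A.powerset, Q B * ((∏ i ∈ B, p i) * ∏ i ∈ A \ B, (1 - p i))

lemma mext_insert {ι : Type*} [DecidableEq ι] (p : ι → ℝ) (Q : Finset ι → ℝ)
    {e : ι} {A : Finset ι} (he : e ∉ A) :
    mext p Q (insert e A)
      = (1 - p e) * mext p Q A + p e * mext p (fun B => Q (insert e B)) A := by
  unfold mext
  rw [Finset.sum_powerset_insert he, Finset.mul_sum, Finset.mul_sum]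
  congr 1
  · refine Finset.sum_congr rfl fun B hB => ?_
    rw [Finset.mem_powerset] at hB
    have heB : e ∉ B := fun h => he (hB h)
    have h1 : insert e A \ B = insert e (A \ B) := by
      ext x
      have hxe : x ∈ A → x ≠ e := fun hx h => he (h ▸ hx)
      simp only [Finset.mem_sdiff, Finset.mem_insert]
      constructor
      · rintro ⟨h | h, h2⟩
        · exact Or.inl h
        · exact Or.inr ⟨h, h2⟩
      · rintro (h | ⟨h, h2⟩)
        · exact ⟨Or.inl h, fun hb => heB (h ▸ hb)⟩
        · exact ⟨Or.inr h, h2⟩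
    have h2 : e ∉ A \ B := fun h => he (Finset.mem_sdiff.1 h).1
    rw [h1, Finset.prod_insert h2]; ring
  · refine Finset.sum_congr rfl fun B hB => ?_
    rw [Finset.mem_powerset] at hB
    have heB : e ∉ B := fun h => he (hB h)
    have h1 : insert e A \ insert e B = A \ B := by
      ext x
      have hxe : x ∈ A → x ≠ e := fun hx h => he (h ▸ hx)
      simp only [Finset.mem_sdiff, Finset.mem_insert]
      constructor
      · rintro ⟨h | h, h2⟩
        · exact absurd (Or.inl h) h2
        · exact ⟨h, fun hb => h2 (Or.inr hb)⟩
      · rintro ⟨h, h2⟩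
        exact ⟨Or.inr h, fun hb => hb.elim (hxe h) h2⟩
    rw [h1, Finset.prod_insert heB]; ring

lemma mext_half {ι : Type*} [DecidableEq ι] (p : ι → ℝ) (A : Finset ι) :
    ∀ Q : Finset ι → ℝ,
      (∀ A B : Finset ι, A ⊆ B → Q A ≤ Q B) →
      (∀ (A B : Finset ι) (e : ι), A ⊆ B → e ∉ B →
        Q (insert e B) - Q B ≤ Q (insert e A) - Q A) →
      (∀ i ∈ A, 1 / 2 ≤ p i ∧ p i ≤ 1) →
      (1 / 2) * (Q A + Q ∅) ≤ mext p Q A := by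
  induction A using Finset.induction_on with
  | empty =>
    intro Q _ _ _
    have h : mext p Q ∅ = Q ∅ := by simp [mext]
    rw [h]; linarith
  | @insert e s he ih =>
    intro Q hmono hsub hp
    obtain ⟨hpe1, hpe2⟩ := hp e (mem_insert_self e s)
    have hps : ∀ i ∈ s, 1 / 2 ≤ p i ∧ p i ≤ 1 := fun i hi => hp i (mem_insert_of_mem hi)
    have h1 := ih Q hmono hsub hps
    have hQe_mono : ∀ A B : Finset ι, A ⊆ B →
        (fun B => Q (insert e B)) A ≤ (fun B => Q (insert e B)) B :=
      fun A B h => hmono _ _ (insert_subset_insert e h)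
    have hQe_sub : ∀ (A B : Finset ι) (x : ι), A ⊆ B → x ∉ B →
        (fun B => Q (insert e B)) (insert x B) - (fun B => Q (insert e B)) B ≤
          (fun B => Q (insert e B)) (insert x A) - (fun B => Q (insert e B)) A := by
      intro A B x hAB hxB
      by_cases hxe : x = e
      · subst hxe; simp [Finset.insert_idem]
      · simp only []
        rw [Finset.insert_comm e x B, Finset.insert_comm e x A]
        exact hsub (insert e A) (insert e B) x (insert_subset_insert e hAB)
          (by simp [Finset.mem_insert, hxe, hxB])
    have h2 : (1 : ℝ) / 2 * (Q (insert e s) + Q {e}) ≤ mext p (fun B => Q (insert e B)) s := by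
      simpa using ih (fun B => Q (insert e B)) hQe_mono hQe_sub hps
    rw [mext_insert p Q he]
    have hX : Q (insert e s) - Q s ≤ Q {e} - Q ∅ := by
      simpa using hsub ∅ s e (empty_subset s) he
    have hY : 0 ≤ Q (insert e s) - Q s := by
      have := hmono s (insert e s) (subset_insert e s); linarith
    have hb1 : (1 - p e) * ((1 / 2) * (Q s + Q ∅)) ≤ (1 - p e) * mext p Q s :=
      mul_le_mul_of_nonneg_left h1 (by linarith)
    have hb2 : p e * ((1 : ℝ) / 2 * (Q (insert e s) + Q {e})) ≤
        p e * mext p (fun B => Q (insert e B)) s :=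
      mul_le_mul_of_nonneg_left h2 (by linarith)
    nlinarith [mul_nonneg (by linarith : (0:ℝ) ≤ p e)
        (by linarith : 0 ≤ (Q {e} - Q ∅) - (Q (insert e s) - Q s)),
      mul_nonneg (by linarith : (0:ℝ) ≤ 2 * p e - 1) hY]

/-- In the two-sided sequential matching model with easy-to-match
consumers and monotone submodular demand functions, the singleton assortment family
induced by a partition `(A_1,…,A_m)` of the consumers satisfies
`E[M_S] ≥ (1/2)·∑_j r_j Q_j(A_j)`. -/
theorem singleton_assortment_half_guarantee
    {ι κ : Type*} [Fintype ι] [Fintype κ] [DecidableEq ι] [DecidableEq κ]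
    (pc : ι → κ → Finset κ → ℝ)
    (hpc0 : ∀ i j S, 0 ≤ pc i j S)
    (hpcoff : ∀ (i : ι) (j : κ) (S : Finset κ), j ∉ S → pc i j S = 0)
    (hpcsum : ∀ (i : ι) (S : Finset κ), ∑ j ∈ S, pc i j S ≤ 1)
    (heasy : ∀ i j, 1 / 2 ≤ pc i j {j})
    (Q : κ → Finset ι → ℝ)
    (hQrange : ∀ j A, Q j A ∈ Set.Icc (0 : ℝ) 1)
    (hQ0 : ∀ j, Q j ∅ = 0)
    (hQmono : ∀ j (A B : Finset ι), A ⊆ B → Q j A ≤ Q j B)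
    (hQsub : ∀ j (A B : Finset ι) (e : ι), A ⊆ B → e ∉ B →
      Q j (insert e B) - Q j B ≤ Q j (insert e A) - Q j A)
    (r : κ → ℝ) (hr : ∀ j, 0 ≤ r j)
    (A : κ → Finset ι)
    (hdisj : ∀ j j', j ≠ j' → Disjoint (A j) (A j'))
    (hcover : Finset.univ.biUnion A = Finset.univ)
    (S : ι → Finset κ) (hS : ∀ j, ∀ i ∈ A j, S i = {j}) :
    (1 / 2) * ∑ j : κ, r j * Q j (A j) ≤ expRev pc Q r S := by
  unfold expRev
  rw [Finset.mul_sum]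
  apply Finset.sum_le_sum
  intro j _
  have hzero : ∀ i, i ∉ A j → pc i j (S i) = 0 := by
    intro i hi
    have hmem : i ∈ Finset.univ.biUnion A := by rw [hcover]; exact Finset.mem_univ i
    obtain ⟨j', _, hij'⟩ := Finset.mem_biUnion.1 hmem
    have hjj' : j ≠ j' := fun h => hi (h ▸ hij')
    rw [hS j' i hij']
    exact hpcoff i j {j'} (by simpa using hjj')
  have hp : ∀ i ∈ A j, 1 / 2 ≤ pc i j (S i) ∧ pc i j (S i) ≤ 1 := by
    intro i hi
    rw [hS j i hi]
    refine ⟨heasy i j, ?_⟩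
    simpa using hpcsum i {j}
  have hsum : mext (fun i => pc i j (S i)) (Q j) (A j)
      = ∑ B : Finset ι, Q j B * ((∏ i ∈ B, pc i j (S i)) * ∏ i ∈ Bᶜ, (1 - pc i j (S i))) := by
    unfold mext
    rw [show (Finset.univ : Finset (Finset ι)) = (Finset.univ : Finset ι).powerset from
      (Finset.powerset_univ).symm] at *
    calc ∑ B ∈ (A j).powerset,
          Q j B * ((∏ i ∈ B, pc i j (S i)) * ∏ i ∈ A j \ B, (1 - pc i j (S i)))
        = ∑ B ∈ (A j).powerset,
          Q j B * ((∏ i ∈ B, pc i j (S i)) * ∏ i ∈ Bᶜ, (1 - pc i j (S i))) := by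
          refine Finset.sum_congr rfl fun B hB => ?_
          rw [Finset.mem_powerset] at hB
          have hsub' : A j \ B ⊆ Bᶜ := by
            intro x hx
            rw [Finset.mem_compl]
            exact (Finset.mem_sdiff.1 hx).2
          rw [Finset.prod_subset hsub' (fun x hx hnx => ?_)]
          have hxB : x ∉ B := Finset.mem_compl.1 hx
          have hxA : x ∉ A j := fun h => hnx (Finset.mem_sdiff.2 ⟨h, hxB⟩)
          rw [hzero x hxA]; ring
      _ = ∑ B : Finset ι,
          Q j B * ((∏ i ∈ B, pc i j (S i)) * ∏ i ∈ Bᶜ, (1 - pc i j (S i))) := by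
          refine Finset.sum_subset (Finset.subset_univ _) fun B _ hB => ?_
          rw [Finset.mem_powerset] at hB
          obtain ⟨x, hxB, hxA⟩ := Finset.not_subset.1 hB
          rw [Finset.prod_eq_zero hxB (hzero x hxA)]
          ring
  have hkey := mext_half (fun i => pc i j (S i)) (A j) (Q j) (hQmono j) (hQsub j) hp
  calc 1 / 2 * (r j * Q j (A j)) = r j * (1 / 2 * (Q j (A j) + Q j ∅)) := by
        rw [hQ0]; ring
    _ ≤ r j * mext (fun i => pc i j (S i)) (Q j) (A j) :=
        mul_le_mul_of_nonneg_left hkey (hr j)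
    _ = _ := by rw [hsum]
end

section
/- In the two-sided sequential matching model, assume every consumer is easy-to-match (p_i(j,{j}) ≥ 1/2 for all i ∈ N, j ∈ V) and every demand function Q_j : 2^N → [0,1] is monotone, submodular, and satisfies Q_j(∅) = 0. Let (A_1,…,A_m) be pairwise disjoint (possibly empty) subsets of N with union N such that Σ_{j∈V} r_j Q_j(A_j) ≥ (1 − 1/e)·max over all such tuples (B_1,…,B_m) of Σ_{j∈V} r_j Q_j(B_j). Then the singleton assortment family S defined by S_i = {j} for i ∈ A_j satisfies E[M_S] ≥ ((1 − 1/e)/2)·max over all assortment families S' = (S'_1,…,S'_n) with S'_i ⊆ V of E[M_{S'}]. -/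
open Finset

lemma half_lemma {ι : Type*} [DecidableEq ι] (Q : Finset ι → ℝ) (p : ι → ℝ)
    (hmono : ∀ A B : Finset ι, A ⊆ B → Q A ≤ Q B)
    (hsub : ∀ (A B : Finset ι) (e : ι), A ⊆ B → e ∉ B →
      Q (insert e B) - Q B ≤ Q (insert e A) - Q A) :
    ∀ T : Finset ι, (∀ i ∈ T, 1/2 ≤ p i) → (∀ i ∈ T, p i ≤ 1) →
      ∀ B : Finset ι, Disjoint T B →
      (Q (T ∪ B) + Q B) / 2 ≤
        ∑ A ∈ T.powerset, Q (A ∪ B) * ((∏ i ∈ A, p i) * ∏ i ∈ T \ A, (1 - p i)) := by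
  intro T
  induction T using Finset.induction_on with
  | empty =>
    intro _ _ B _
    simp only [powerset_empty, sum_singleton, empty_union, prod_empty, sdiff_empty, one_mul,
      mul_one]
    linarith
  | @insert e T he ih =>
    intro hp1 hp2 B hdisj
    have heB : e ∉ B := Finset.disjoint_left.mp hdisj (mem_insert_self e T)
    have hdTB : Disjoint T B := hdisj.mono_left (subset_insert e T)
    have hdTB' : Disjoint T (insert e B) := by
      rw [Finset.disjoint_insert_right]; exact ⟨he, hdTB⟩
    have hp1' : ∀ i ∈ T, 1/2 ≤ p i := fun i hi => hp1 i (mem_insert_of_mem hi)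
    have hp2' : ∀ i ∈ T, p i ≤ 1 := fun i hi => hp2 i (mem_insert_of_mem hi)
    have hpe1 : 1/2 ≤ p e := hp1 e (mem_insert_self _ _)
    have hpe2 : p e ≤ 1 := hp2 e (mem_insert_self _ _)
    rw [Finset.sum_powerset_insert he]
    have h2A : ∀ A : Finset ι, insert e T \ insert e A = T \ A := by
      intro A; ext x
      simp only [mem_sdiff, mem_insert, not_or]
      constructor
      · rintro ⟨hx | hx, hxe, hxA⟩
        · exact absurd hx hxe
        · exact ⟨hx, hxA⟩
      · rintro ⟨hx, hxA⟩
        exact ⟨Or.inr hx, fun h => he (h ▸ hx), hxA⟩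
    have key : ∀ A ∈ T.powerset,
        Q (A ∪ B) * ((∏ i ∈ A, p i) * ∏ i ∈ insert e T \ A, (1 - p i))
          + Q (insert e A ∪ B) * ((∏ i ∈ insert e A, p i) *
              ∏ i ∈ insert e T \ insert e A, (1 - p i))
        = ((1 - p e) * Q (A ∪ B) + p e * Q (A ∪ insert e B)) *
            ((∏ i ∈ A, p i) * ∏ i ∈ T \ A, (1 - p i)) := by
      intro A hA
      have hAT : A ⊆ T := mem_powerset.mp hA
      have heA : e ∉ A := fun h => he (hAT h)
      have heTA : e ∉ T \ A := fun h => he (mem_sdiff.mp h).1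
      rw [Finset.insert_sdiff_of_notMem _ heA, Finset.prod_insert heTA,
        Finset.prod_insert heA, h2A A, Finset.insert_union, ← Finset.union_insert]
      ring
    rw [← Finset.sum_add_distrib, Finset.sum_congr rfl key]
    have hgnn : ∀ A ∈ T.powerset, 0 ≤ (∏ i ∈ A, p i) * ∏ i ∈ T \ A, (1 - p i) := by
      intro A hA
      have hAT : A ⊆ T := mem_powerset.mp hA
      exact mul_nonneg (prod_nonneg fun i hi => by linarith [hp1' i (hAT hi)])
        (prod_nonneg fun i hi => by linarith [hp2' i (mem_sdiff.mp hi).1])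
    have hsum1 : ∑ A ∈ T.powerset,
        (Q (A ∪ B)/2 + Q (A ∪ insert e B)/2) * ((∏ i ∈ A, p i) * ∏ i ∈ T \ A, (1 - p i))
        ≤ ∑ A ∈ T.powerset,
        ((1 - p e) * Q (A ∪ B) + p e * Q (A ∪ insert e B)) *
          ((∏ i ∈ A, p i) * ∏ i ∈ T \ A, (1 - p i)) := by
      apply Finset.sum_le_sum
      intro A hA
      apply mul_le_mul_of_nonneg_right _ (hgnn A hA)
      have hm : Q (A ∪ B) ≤ Q (A ∪ insert e B) :=
        hmono _ _ (union_subset_union_right (subset_insert _ _))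
      nlinarith
    have hsplit : ∑ A ∈ T.powerset,
        (Q (A ∪ B)/2 + Q (A ∪ insert e B)/2) * ((∏ i ∈ A, p i) * ∏ i ∈ T \ A, (1 - p i))
        = (∑ A ∈ T.powerset, Q (A ∪ B) * ((∏ i ∈ A, p i) * ∏ i ∈ T \ A, (1 - p i)))/2
          + (∑ A ∈ T.powerset, Q (A ∪ insert e B) *
              ((∏ i ∈ A, p i) * ∏ i ∈ T \ A, (1 - p i)))/2 := by
      rw [Finset.sum_div, Finset.sum_div, ← Finset.sum_add_distrib]
      exact Finset.sum_congr rfl fun A _ => by ring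
    have ih1 := ih hp1' hp2' B hdTB
    have ih2 := ih hp1' hp2' (insert e B) hdTB'
    have hsubm := hsub B (T ∪ B) e Finset.subset_union_right
      (by simp only [mem_union, not_or]; exact ⟨he, heB⟩)
    have hU1 : insert e T ∪ B = insert e (T ∪ B) := Finset.insert_union e T B
    have hU2 : T ∪ insert e B = insert e (T ∪ B) := Finset.union_insert e T B
    rw [hU1]
    rw [hU2] at ih2
    linarith


open Finset

lemma upper_lemma {ι κ : Type*} [Fintype ι] [Fintype κ] [DecidableEq ι] [DecidableEq κ]
    (w : ι → κ → ℝ) (hw0 : ∀ i j, 0 ≤ w i j) (hw1 : ∀ i, ∑ j, w i j ≤ 1)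
    (Q : κ → Finset ι → ℝ) (hQmono : ∀ j (X Y : Finset ι), X ⊆ Y → Q j X ≤ Q j Y)
    (r : κ → ℝ) (hr : ∀ j, 0 ≤ r j) (c W : ℝ) (hc : 0 ≤ c) (hW : 0 ≤ W)
    (hpart : ∀ B : κ → Finset ι, (∀ j j', j ≠ j' → Disjoint (B j) (B j')) →
      Finset.univ.biUnion B = Finset.univ →
      c * ∑ j : κ, r j * Q j (B j) ≤ W) :
    c * (∑ j : κ, r j * ∑ A : Finset ι,
        Q j A * ((∏ i ∈ A, w i j) * ∏ i ∈ Aᶜ, (1 - w i j))) ≤ W := by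
  by_cases hκ : Nonempty κ
  case neg =>
    have : IsEmpty κ := not_nonempty_iff.mp hκ
    simpa using hW
  obtain ⟨j₀⟩ := hκ
  set q : ι → Option κ → ℝ := fun i o => o.elim (1 - ∑ j, w i j) (w i ·) with hq
  have hq0 : ∀ i o, 0 ≤ q i o := by
    rintro i (_ | j)
    · simp only [hq, Option.elim]; linarith [hw1 i]
    · exact hw0 i j
  have hq1 : ∀ i, ∑ o : Option κ, q i o = 1 := by
    intro i
    rw [Fintype.sum_option]
    simp only [hq, Option.elim]
    ring
  set P : (ι → Option κ) → ℝ := fun f => ∏ i, q i (f i) with hP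
  have hP0 : ∀ f, 0 ≤ P f := fun f => prod_nonneg fun i _ => hq0 i (f i)
  have hPsum : ∑ f : ι → Option κ, P f = 1 := by
    have h := Finset.prod_univ_sum (fun _ : ι => (univ : Finset (Option κ))) (fun i o => q i o)
    rw [Fintype.piFinset_univ] at h
    rw [← h]
    simp [hq1]
  -- marginal computation
  have fiber_sum : ∀ (j : κ) (A : Finset ι),
      ∑ f ∈ univ.filter (fun f : ι → Option κ =>
        (univ.filter fun i => f i = some j) = A), P f
      = (∏ i ∈ A, w i j) * ∏ i ∈ Aᶜ, (1 - w i j) := by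
    intro j A
    set t : ι → Finset (Option κ) := fun i =>
      if i ∈ A then {some j} else (univ : Finset (Option κ)).erase (some j) with ht
    have hset : univ.filter (fun f : ι → Option κ =>
        (univ.filter fun i => f i = some j) = A) = Fintype.piFinset t := by
      ext f
      simp only [mem_filter, mem_univ, true_and, Fintype.mem_piFinset, Finset.ext_iff]
      constructor
      · intro h i
        by_cases hiA : i ∈ A
        · simp [ht, hiA, (h i).mpr hiA]
        · simp only [ht, hiA, if_false, mem_erase, mem_univ, and_true]
          exact fun hfi => hiA ((h i).mp hfi)
      · intro h i
        have hti := h i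
        by_cases hiA : i ∈ A
        · simp only [ht, hiA, if_true, mem_singleton] at hti
          simp [hti, hiA]
        · simp only [ht, hiA, if_false, mem_erase, mem_univ, and_true] at hti
          simp [hti, hiA]
    rw [hset, ← Finset.prod_univ_sum t (fun i o => q i o)]
    have : ∀ i : ι, ∑ o ∈ t i, q i o = if i ∈ A then w i j else 1 - w i j := by
      intro i
      by_cases hiA : i ∈ A
      · simp [ht, hiA, hq]
      · simp only [ht, hiA, if_false]
        rw [Finset.sum_erase_eq_sub (mem_univ _), hq1 i]
        simp [hq]
    rw [Finset.prod_congr rfl fun i _ => this i, Finset.prod_ite]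
    congr 1
    · congr 1
      ext i; simp
    · congr 1
      ext i; simp
  have marginal : ∀ j : κ,
      ∑ f : ι → Option κ, P f * Q j (univ.filter fun i => f i = some j)
      = ∑ A : Finset ι, Q j A * ((∏ i ∈ A, w i j) * ∏ i ∈ Aᶜ, (1 - w i j)) := by
    intro j
    rw [← Finset.sum_fiberwise_of_maps_to (g := fun f : ι → Option κ =>
      univ.filter fun i => f i = some j) (t := univ) (fun f _ => mem_univ _)
      (fun f => P f * Q j (univ.filter fun i => f i = some j))]
    apply Finset.sum_congr rfl
    intro A _
    have : ∀ f ∈ univ.filter (fun f : ι → Option κ =>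
        (univ.filter fun i => f i = some j) = A),
        P f * Q j (univ.filter fun i => f i = some j) = P f * Q j A := by
      intro f hf
      rw [(mem_filter.mp hf).2]
    rw [Finset.sum_congr rfl this, ← Finset.sum_mul, fiber_sum j A]
    ring
  -- pointwise bound
  have pointwise : ∀ f : ι → Option κ,
      c * ∑ j : κ, r j * Q j (univ.filter fun i => f i = some j) ≤ W := by
    intro f
    set Bf : κ → Finset ι := fun j =>
      if j = j₀ then (univ.filter fun i => f i = some j₀) ∪ (univ.filter fun i => f i = none)
      else univ.filter fun i => f i = some j with hBf
    have hdisjB : ∀ j j', j ≠ j' → Disjoint (Bf j) (Bf j') := by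
      intro j j' hne
      rw [Finset.disjoint_left]
      intro i hi hi'
      simp only [hBf] at hi hi'
      by_cases h1 : j = j₀ <;> by_cases h2 : j' = j₀
      · exact hne (h1.trans h2.symm)
      · rw [if_pos h1] at hi; rw [if_neg h2] at hi'
        simp only [mem_union, mem_filter, mem_univ, true_and] at hi hi'
        rcases hi with hi | hi
        · exact h2 (Option.some_injective _ (hi'.symm.trans hi))
        · exact Option.some_ne_none _ (hi'.symm.trans hi)
      · rw [if_neg h1] at hi; rw [if_pos h2] at hi'
        simp only [mem_union, mem_filter, mem_univ, true_and] at hi hi'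
        rcases hi' with hi' | hi'
        · exact h1 (Option.some_injective _ (hi.symm.trans hi'))
        · exact Option.some_ne_none _ (hi.symm.trans hi')
      · rw [if_neg h1] at hi; rw [if_neg h2] at hi'
        simp only [mem_filter, mem_univ, true_and] at hi hi'
        exact hne (Option.some_injective _ (hi.symm.trans hi'))
    have hcoverB : Finset.univ.biUnion Bf = Finset.univ := by
      ext i
      simp only [mem_biUnion, mem_univ, true_and, iff_true]
      cases h : f i with
      | none => exact ⟨j₀, by simp [hBf, h]⟩
      | some j =>
        by_cases hj : j = j₀
        · exact ⟨j₀, by simp [hBf, h, hj]⟩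
        · exact ⟨j, by simp [hBf, hj, h]⟩
    refine le_trans ?_ (hpart Bf hdisjB hcoverB)
    apply mul_le_mul_of_nonneg_left _ hc
    apply Finset.sum_le_sum
    intro j _
    apply mul_le_mul_of_nonneg_left _ (hr j)
    apply hQmono
    simp only [hBf]
    split_ifs with h1
    · subst h1; exact Finset.subset_union_left
    · exact Finset.Subset.refl _
  -- combine
  have hswap : c * (∑ j : κ, r j * ∑ A : Finset ι,
      Q j A * ((∏ i ∈ A, w i j) * ∏ i ∈ Aᶜ, (1 - w i j)))
      = ∑ f : ι → Option κ, P f * (c * ∑ j : κ,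
          r j * Q j (univ.filter fun i => f i = some j)) := by
    rw [show (∑ j : κ, r j * ∑ A : Finset ι,
        Q j A * ((∏ i ∈ A, w i j) * ∏ i ∈ Aᶜ, (1 - w i j)))
        = ∑ j : κ, r j * ∑ f : ι → Option κ,
            P f * Q j (univ.filter fun i => f i = some j) from
      Finset.sum_congr rfl fun j _ => by rw [marginal j]]
    simp only [Finset.mul_sum]
    rw [Finset.sum_comm]
    exact Finset.sum_congr rfl fun f _ => Finset.sum_congr rfl fun j _ => by ring
  rw [hswap]
  calc ∑ f : ι → Option κ, P f * (c * ∑ j : κ,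
        r j * Q j (univ.filter fun i => f i = some j))
      ≤ ∑ f : ι → Option κ, P f * W :=
        Finset.sum_le_sum fun f _ => mul_le_mul_of_nonneg_left (pointwise f) (hP0 f)
    _ = W := by rw [← Finset.sum_mul, hPsum, one_mul]


/-- With easy-to-match consumers and monotone submodular demand
functions, if the partition `(A_1,…,A_m)` is a `(1 − 1/e)`-approximate solution of the
submodular welfare problem, then the induced singleton assortment family is a
`(1 − 1/e)/2`-approximation for the assortment optimization problem. -/
theorem singleton_assortment_approximation
    {ι κ : Type*} [Fintype ι] [Fintype κ] [DecidableEq ι] [DecidableEq κ]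
    (pc : ι → κ → Finset κ → ℝ)
    (hpc0 : ∀ i j S, 0 ≤ pc i j S)
    (hpcoff : ∀ (i : ι) (j : κ) (S : Finset κ), j ∉ S → pc i j S = 0)
    (hpcsum : ∀ (i : ι) (S : Finset κ), ∑ j ∈ S, pc i j S ≤ 1)
    (heasy : ∀ i j, 1 / 2 ≤ pc i j {j})
    (Q : κ → Finset ι → ℝ)
    (hQrange : ∀ j A, Q j A ∈ Set.Icc (0 : ℝ) 1)
    (hQ0 : ∀ j, Q j ∅ = 0)
    (hQmono : ∀ j (A B : Finset ι), A ⊆ B → Q j A ≤ Q j B)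
    (hQsub : ∀ j (A B : Finset ι) (e : ι), A ⊆ B → e ∉ B →
      Q j (insert e B) - Q j B ≤ Q j (insert e A) - Q j A)
    (r : κ → ℝ) (hr : ∀ j, 0 ≤ r j)
    (A : κ → Finset ι)
    (hdisj : ∀ j j', j ≠ j' → Disjoint (A j) (A j'))
    (hcover : Finset.univ.biUnion A = Finset.univ)
    (happrox : ∀ B : κ → Finset ι,
      (∀ j j', j ≠ j' → Disjoint (B j) (B j')) →
      Finset.univ.biUnion B = Finset.univ →
      (1 - (Real.exp 1)⁻¹) * ∑ j : κ, r j * Q j (B j) ≤ ∑ j : κ, r j * Q j (A j))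
    (S : ι → Finset κ) (hS : ∀ j, ∀ i ∈ A j, S i = {j}) :
    ∀ S' : ι → Finset κ,
      ((1 - (Real.exp 1)⁻¹) / 2) * expRev pc Q r S' ≤ expRev pc Q r S := by
  classical
  intro S'
  have hc : (0:ℝ) ≤ 1 - (Real.exp 1)⁻¹ := by
    have h1 : (1:ℝ) ≤ Real.exp 1 := by
      have := Real.add_one_le_exp (1:ℝ); linarith
    have h2 : (Real.exp 1)⁻¹ ≤ 1 := by
      rw [inv_le_one_iff₀]; right; exact h1
    linarith
  set W := ∑ j : κ, r j * Q j (A j) with hWdef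
  have hW : 0 ≤ W := Finset.sum_nonneg fun j _ =>
    mul_nonneg (hr j) (hQrange j (A j)).1
  -- upper bound
  have hU : (1 - (Real.exp 1)⁻¹) * expRev pc Q r S' ≤ W := by
    unfold expRev
    refine upper_lemma (fun i j => pc i j (S' i)) (fun i j => hpc0 i j _) ?_ Q hQmono r hr
      _ W hc hW happrox
    intro i
    have hsub : ∑ j : κ, pc i j (S' i) = ∑ j ∈ S' i, pc i j (S' i) :=
      (Finset.sum_subset (Finset.subset_univ _) (fun j _ hj => hpcoff i j _ hj)).symm
    rw [hsub]; exact hpcsum i (S' i)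
  -- lower bound
  have hL : ∀ j : κ, Q j (A j) / 2 ≤ ∑ X : Finset ι,
      Q j X * ((∏ i ∈ X, pc i j (S i)) * ∏ i ∈ Xᶜ, (1 - pc i j (S i))) := by
    intro j
    have hp0 : ∀ i, i ∉ A j → pc i j (S i) = 0 := by
      intro i hi
      have hmem : i ∈ Finset.univ.biUnion A := by rw [hcover]; exact Finset.mem_univ i
      obtain ⟨j', _, hij'⟩ := Finset.mem_biUnion.mp hmem
      have hne : j' ≠ j := fun h => hi (h ▸ hij')
      rw [hS j' i hij']
      exact hpcoff i j _ (by
        rw [Finset.mem_singleton]; exact fun h => hne h.symm)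
    have restrict : ∑ X : Finset ι,
        Q j X * ((∏ i ∈ X, pc i j (S i)) * ∏ i ∈ Xᶜ, (1 - pc i j (S i)))
        = ∑ X ∈ (A j).powerset,
          Q j X * ((∏ i ∈ X, pc i j (S i)) * ∏ i ∈ Xᶜ, (1 - pc i j (S i))) := by
      refine (Finset.sum_subset (Finset.subset_univ _) fun X _ hX => ?_).symm
      obtain ⟨i, hiX, hiA⟩ := Finset.not_subset.mp
        (fun h => hX (Finset.mem_powerset.mpr h))
      rw [Finset.prod_eq_zero hiX (hp0 i hiA)]; ring
    rw [restrict]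
    have hcompl : ∀ X ∈ (A j).powerset,
        Q j X * ((∏ i ∈ X, pc i j (S i)) * ∏ i ∈ Xᶜ, (1 - pc i j (S i)))
        = Q j X * ((∏ i ∈ X, pc i j (S i)) * ∏ i ∈ A j \ X, (1 - pc i j (S i))) := by
      intro X hX
      have hXA : X ⊆ A j := Finset.mem_powerset.mp hX
      have hsplit : Xᶜ = (A j \ X) ∪ (A j)ᶜ := by
        ext x
        simp only [Finset.mem_compl, Finset.mem_union, Finset.mem_sdiff]
        constructor
        · intro h
          by_cases hx : x ∈ A j
          · exact Or.inl ⟨hx, h⟩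
          · exact Or.inr hx
        · rintro (⟨_, h⟩ | h)
          · exact h
          · exact fun hx => h (hXA hx)
      have hdisj2 : Disjoint (A j \ X) (A j)ᶜ := by
        rw [Finset.disjoint_left]
        intro x hx hx'
        exact (Finset.mem_compl.mp hx') (Finset.mem_sdiff.mp hx).1
      have hone : ∏ i ∈ (A j)ᶜ, (1 - pc i j (S i)) = 1 :=
        Finset.prod_eq_one fun i hi => by rw [hp0 i (Finset.mem_compl.mp hi)]; ring
      rw [hsplit, Finset.prod_union hdisj2, hone, mul_one]
    rw [Finset.sum_congr rfl hcompl]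
    have hkey := half_lemma (Q j) (fun i => pc i j (S i)) (hQmono j) (hQsub j) (A j)
      (fun i hi => by
        show 1/2 ≤ pc i j (S i)
        rw [hS j i hi]; exact heasy i j)
      (fun i hi => by
        show pc i j (S i) ≤ 1
        rw [hS j i hi]
        have := hpcsum i {j}
        simpa using this)
      ∅ (Finset.disjoint_right.mpr fun _ h => absurd h (Finset.notMem_empty _))
    simp only [Finset.union_empty, hQ0 j, add_zero] at hkey
    exact hkey
  have hL2 : W / 2 ≤ expRev pc Q r S := by
    unfold expRev
    calc W / 2 = ∑ j : κ, r j * (Q j (A j) / 2) := by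
          rw [hWdef, Finset.sum_div]
          exact Finset.sum_congr rfl fun j _ => by ring
      _ ≤ _ := Finset.sum_le_sum fun j _ =>
          mul_le_mul_of_nonneg_left (hL j) (hr j)
  linarith
end

section
/- In the two-sided sequential matching model, assume every demand function Q_j : 2^N → [0,1] is monotone with Q_j(∅) = 0, and let Q_min = min_{j∈V, i∈N} Q_j({i}). Then for every assortment family S = (S_1,…,S_n), with η_j(S) = Σ_{i∈N} p_i(j,S_i)·1{j ∈ S_i}: (1 − 1/e)·Q_min·Σ_{j∈V} r_j·min{1, η_j(S)} ≤ E[M_S] ≤ Σ_{j∈V} r_j·min{1, η_j(S)}. In particular, if every supplier is easy-to-match, i.e., Q_j({i}) ≥ 1/2 for all j ∈ V and i ∈ N, the lower bound holds with factor (1 − 1/e)/2 in place of (1 − 1/e)·Q_min. -/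
open Finset

section aux
variable {ι : Type*} [Fintype ι] [DecidableEq ι]

lemma weights_nonneg (p : ι → ℝ) (hp0 : ∀ i, 0 ≤ p i) (hp1 : ∀ i, p i ≤ 1) (A : Finset ι) :
    0 ≤ (∏ i ∈ A, p i) * ∏ i ∈ Aᶜ, (1 - p i) :=
  mul_nonneg (Finset.prod_nonneg fun i _ => hp0 i)
    (Finset.prod_nonneg fun i _ => by linarith [hp1 i])

lemma sum_weights (p : ι → ℝ) :
    ∑ A : Finset ι, (∏ i ∈ A, p i) * ∏ i ∈ Aᶜ, (1 - p i) = 1 := by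
  have h := Fintype.prod_add p (fun i => 1 - p i)
  simpa using h.symm

lemma sum_ind_weights (p : ι → ℝ) :
    ∑ A : Finset ι, (if A = ∅ then (0:ℝ) else 1) * ((∏ i ∈ A, p i) * ∏ i ∈ Aᶜ, (1 - p i))
      = 1 - ∏ i : ι, (1 - p i) := by
  have h := sum_weights p
  rw [← Finset.add_sum_erase _ _ (Finset.mem_univ (∅ : Finset ι))] at h
  rw [← Finset.add_sum_erase _ _ (Finset.mem_univ (∅ : Finset ι)), if_pos rfl, zero_mul,
    zero_add]
  rw [Finset.sum_congr rfl (fun A hA => by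
    rw [if_neg (Finset.mem_erase.1 hA).1, one_mul])]
  have h2 : (∏ i ∈ (∅:Finset ι), p i) * ∏ i ∈ (∅:Finset ι)ᶜ, (1 - p i)
      = ∏ i : ι, (1 - p i) := by simp
  linarith [h, h2]

lemma prod_one_sub_ge (p : ι → ℝ) (hp0 : ∀ i, 0 ≤ p i) (hp1 : ∀ i, p i ≤ 1) :
    1 - ∑ i : ι, p i ≤ ∏ i : ι, (1 - p i) := by
  have key : ∀ s : Finset ι, 1 - ∑ i ∈ s, p i ≤ ∏ i ∈ s, (1 - p i) := by
    intro s
    induction s using Finset.induction with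
    | empty => simp
    | @insert a s hx ih =>
      rw [Finset.sum_insert hx, Finset.prod_insert hx]
      have hs0 : 0 ≤ ∑ i ∈ s, p i := Finset.sum_nonneg fun i _ => hp0 i
      nlinarith [hp0 a, hp1 a, mul_le_mul_of_nonneg_left ih (by linarith [hp1 a] :
        (0:ℝ) ≤ 1 - p a)]
  exact key univ

lemma prod_one_sub_le_exp (p : ι → ℝ) (hp0 : ∀ i, 0 ≤ p i) (hp1 : ∀ i, p i ≤ 1) :
    ∏ i : ι, (1 - p i) ≤ Real.exp (-∑ i : ι, p i) := by
  have h1 : ∏ i : ι, (1 - p i) ≤ ∏ i : ι, Real.exp (-p i) :=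
    Finset.prod_le_prod (fun i _ => by linarith [hp1 i])
      (fun i _ => by linarith [Real.add_one_le_exp (-p i)])
  calc ∏ i : ι, (1 - p i) ≤ ∏ i : ι, Real.exp (-p i) := h1
    _ = Real.exp (∑ i : ι, -p i) := (Real.exp_sum _ _).symm
    _ = Real.exp (-∑ i : ι, p i) := by rw [Finset.sum_neg_distrib]

/-- Convexity: `exp (-x) ≤ 1 - (1 - e⁻¹) * x` for `x ∈ [0,1]`. -/
lemma exp_neg_le (x : ℝ) (h0 : 0 ≤ x) (h1 : x ≤ 1) :
    Real.exp (-x) ≤ 1 - (1 - (Real.exp 1)⁻¹) * x := by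
  have := convexOn_exp.2 (Set.mem_univ (0:ℝ)) (Set.mem_univ (-1:ℝ))
    (by linarith : (0:ℝ) ≤ 1 - x) h0 (by ring)
  simp only [smul_eq_mul] at this
  have hx : (1 - x) * 0 + x * (-1) = -x := by ring
  rw [hx, Real.exp_zero] at this
  rw [← Real.exp_neg]
  nlinarith [this]

/-- Per-supplier bounds. -/
lemma per_supplier (p : ι → ℝ) (hp0 : ∀ i, 0 ≤ p i) (hp1 : ∀ i, p i ≤ 1)
    (f : Finset ι → ℝ) (hf0 : f ∅ = 0) (hf1 : ∀ A, f A ≤ 1)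
    (c : ℝ) (hc : 0 ≤ c) (hfge : ∀ A : Finset ι, A.Nonempty → c ≤ f A) :
    (1 - (Real.exp 1)⁻¹) * c * min 1 (∑ i : ι, p i) ≤
      ∑ A : Finset ι, f A * ((∏ i ∈ A, p i) * ∏ i ∈ Aᶜ, (1 - p i)) ∧
    ∑ A : Finset ι, f A * ((∏ i ∈ A, p i) * ∏ i ∈ Aᶜ, (1 - p i)) ≤
      min 1 (∑ i : ι, p i) := by
  set η := ∑ i : ι, p i with hη
  have hη0 : 0 ≤ η := Finset.sum_nonneg fun i _ => hp0 i
  set m := min 1 η with hm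
  have hm0 : 0 ≤ m := le_min zero_le_one hη0
  have hm1 : m ≤ 1 := min_le_left _ _
  have hw := weights_nonneg p hp0 hp1
  -- key: 1 - ∏(1-p) bounds
  have hind := sum_ind_weights p
  constructor
  · -- lower bound
    have step1 : ∑ A : Finset ι, (c * if A = ∅ then (0:ℝ) else 1) *
        ((∏ i ∈ A, p i) * ∏ i ∈ Aᶜ, (1 - p i)) ≤
        ∑ A : Finset ι, f A * ((∏ i ∈ A, p i) * ∏ i ∈ Aᶜ, (1 - p i)) := by
      apply Finset.sum_le_sum
      intro A _
      apply mul_le_mul_of_nonneg_right _ (hw A)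
      by_cases hA : A = ∅
      · simp [hA, hf0]
      · rw [if_neg hA, mul_one]
        exact hfge A (Finset.nonempty_iff_ne_empty.2 hA)
    have step1' : ∑ A : Finset ι, (c * if A = ∅ then (0:ℝ) else 1) *
        ((∏ i ∈ A, p i) * ∏ i ∈ Aᶜ, (1 - p i)) = c * (1 - ∏ i : ι, (1 - p i)) := by
      rw [← hind, Finset.mul_sum]
      apply Finset.sum_congr rfl
      intro A _; ring
    have step2 : ∏ i : ι, (1 - p i) ≤ Real.exp (-m) := by
      calc ∏ i : ι, (1 - p i) ≤ Real.exp (-η) := prod_one_sub_le_exp p hp0 hp1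
        _ ≤ Real.exp (-m) := Real.exp_le_exp.2 (by simp [hm, min_le_right, neg_le_neg_iff]
            )
    have step3 : (1 - (Real.exp 1)⁻¹) * m ≤ 1 - ∏ i : ι, (1 - p i) := by
      have := exp_neg_le m hm0 hm1
      linarith [step2]
    calc (1 - (Real.exp 1)⁻¹) * c * m = c * ((1 - (Real.exp 1)⁻¹) * m) := by ring
      _ ≤ c * (1 - ∏ i : ι, (1 - p i)) := mul_le_mul_of_nonneg_left step3 hc
      _ = _ := step1'.symm
      _ ≤ _ := step1
  · -- upper bound
    have step1 : ∑ A : Finset ι, f A * ((∏ i ∈ A, p i) * ∏ i ∈ Aᶜ, (1 - p i)) ≤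
        ∑ A : Finset ι, (if A = ∅ then (0:ℝ) else 1) *
          ((∏ i ∈ A, p i) * ∏ i ∈ Aᶜ, (1 - p i)) := by
      apply Finset.sum_le_sum
      intro A _
      apply mul_le_mul_of_nonneg_right _ (hw A)
      by_cases hA : A = ∅
      · simp [hA, hf0]
      · rw [if_neg hA]; exact hf1 A
    rw [hind] at step1
    have hprod0 : 0 ≤ ∏ i : ι, (1 - p i) :=
      Finset.prod_nonneg fun i _ => by linarith [hp1 i]
    have hprodge : 1 - η ≤ ∏ i : ι, (1 - p i) := prod_one_sub_ge p hp0 hp1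
    have : 1 - ∏ i : ι, (1 - p i) ≤ m := le_min (by linarith) (by linarith)
    linarith

end aux

/-- **Lemma 3.2.** With monotone demand functions vanishing at `∅`, the
expected revenue is sandwiched between `(1 − 1/e)·Q_min·∑_j r_j min{1, η_j(S)}` and
`∑_j r_j min{1, η_j(S)}`, where `η_j(S)` is the expected number of consumers picking
supplier `j`; if every supplier is easy-to-match the lower-bound factor is `(1 − 1/e)/2`. -/

theorem expected_revenue_double_bound
    {ι κ : Type*} [Fintype ι] [Fintype κ] [DecidableEq ι] [DecidableEq κ]
    [Nonempty ι] [Nonempty κ]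
    (pc : ι → κ → Finset κ → ℝ)
    (hpc0 : ∀ i j S, 0 ≤ pc i j S)
    (hpcoff : ∀ (i : ι) (j : κ) (S : Finset κ), j ∉ S → pc i j S = 0)
    (hpcsum : ∀ (i : ι) (S : Finset κ), ∑ j ∈ S, pc i j S ≤ 1)
    (Q : κ → Finset ι → ℝ)
    (hQrange : ∀ j A, Q j A ∈ Set.Icc (0 : ℝ) 1)
    (hQ0 : ∀ j, Q j ∅ = 0)
    (hQmono : ∀ j (A B : Finset ι), A ⊆ B → Q j A ≤ Q j B)
    (r : κ → ℝ) (hr : ∀ j, 0 ≤ r j)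
    (S : ι → Finset κ) :
    ((1 - (Real.exp 1)⁻¹) *
        ((Finset.univ : Finset (κ × ι)).inf' Finset.univ_nonempty fun q => Q q.1 {q.2}) *
        ∑ j : κ, r j * min 1 (∑ i : ι, if j ∈ S i then pc i j (S i) else 0) ≤
      expRev pc Q r S) ∧
    (expRev pc Q r S ≤
      ∑ j : κ, r j * min 1 (∑ i : ι, if j ∈ S i then pc i j (S i) else 0)) ∧
    ((∀ (j : κ) (i : ι), 1 / 2 ≤ Q j {i}) →
      ((1 - (Real.exp 1)⁻¹) / 2) *
          ∑ j : κ, r j * min 1 (∑ i : ι, if j ∈ S i then pc i j (S i) else 0) ≤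
        expRev pc Q r S) := by
  classical
  set Qmin : ℝ :=
    (Finset.univ : Finset (κ × ι)).inf' Finset.univ_nonempty (fun q => Q q.1 {q.2}) with hQmin
  have hQmin0 : 0 ≤ Qmin := by
    apply Finset.le_inf'
    intro q _
    exact (hQrange q.1 {q.2}).1
  -- pointwise bounds for p
  have hp0 : ∀ i j, 0 ≤ pc i j (S i) := fun i j => hpc0 i j (S i)
  have hp1 : ∀ i j, pc i j (S i) ≤ 1 := by
    intro i j
    by_cases hj : j ∈ S i
    · exact le_trans (Finset.single_le_sum (fun k _ => hpc0 i k (S i)) hj) (hpcsum i (S i))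
    · rw [hpcoff i j (S i) hj]; exact zero_le_one
  have hsum_eq : ∀ j : κ, (∑ i : ι, if j ∈ S i then pc i j (S i) else 0)
      = ∑ i : ι, pc i j (S i) := by
    intro j
    apply Finset.sum_congr rfl
    intro i _
    by_cases hj : j ∈ S i
    · rw [if_pos hj]
    · rw [if_neg hj, hpcoff i j (S i) hj]
  have hee : (0:ℝ) ≤ 1 - (Real.exp 1)⁻¹ := by
    have : (Real.exp 1)⁻¹ ≤ 1 := by
      rw [inv_le_one_iff₀]
      right
      linarith [Real.add_one_le_exp (1:ℝ)]
    linarith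
  -- per supplier bounds
  have key : ∀ j : κ,
      (1 - (Real.exp 1)⁻¹) * Qmin * min 1 (∑ i : ι, pc i j (S i)) ≤
        ∑ A : Finset ι, Q j A * ((∏ i ∈ A, pc i j (S i)) * ∏ i ∈ Aᶜ, (1 - pc i j (S i))) ∧
      ∑ A : Finset ι, Q j A * ((∏ i ∈ A, pc i j (S i)) * ∏ i ∈ Aᶜ, (1 - pc i j (S i))) ≤
        min 1 (∑ i : ι, pc i j (S i)) := by
    intro j
    apply per_supplier (fun i => pc i j (S i)) (fun i => hp0 i j) (fun i => hp1 i j)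
      (Q j) (hQ0 j) (fun A => (hQrange j A).2) Qmin hQmin0
    intro A hA
    obtain ⟨i, hi⟩ := hA
    calc Qmin ≤ Q j {i} := Finset.inf'_le _ (Finset.mem_univ (j, i))
      _ ≤ Q j A := hQmono j {i} A (Finset.singleton_subset_iff.2 hi)
  have hterm_nonneg : ∀ j : κ,
      0 ≤ r j * min 1 (∑ i : ι, if j ∈ S i then pc i j (S i) else 0) := by
    intro j
    apply mul_nonneg (hr j)
    rw [hsum_eq j]
    exact le_min zero_le_one (Finset.sum_nonneg fun i _ => hp0 i j)
  have hsum_nonneg : 0 ≤ ∑ j : κ, r j * min 1 (∑ i : ι, if j ∈ S i then pc i j (S i) else 0) :=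
    Finset.sum_nonneg fun j _ => hterm_nonneg j
  have lower : (1 - (Real.exp 1)⁻¹) * Qmin *
      ∑ j : κ, r j * min 1 (∑ i : ι, if j ∈ S i then pc i j (S i) else 0) ≤
      expRev pc Q r S := by
    rw [expRev, Finset.mul_sum]
    apply Finset.sum_le_sum
    intro j _
    rw [hsum_eq j]
    calc (1 - (Real.exp 1)⁻¹) * Qmin * (r j * min 1 (∑ i : ι, pc i j (S i)))
        = r j * ((1 - (Real.exp 1)⁻¹) * Qmin * min 1 (∑ i : ι, pc i j (S i))) := by ring
      _ ≤ r j * _ := mul_le_mul_of_nonneg_left (key j).1 (hr j)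
  refine ⟨lower, ?_, ?_⟩
  · rw [expRev]
    apply Finset.sum_le_sum
    intro j _
    rw [hsum_eq j]
    exact mul_le_mul_of_nonneg_left (key j).2 (hr j)
  · intro heasy
    have hQminhalf : (1:ℝ)/2 ≤ Qmin := by
      apply Finset.le_inf'
      intro q _
      exact heasy q.1 q.2
    calc ((1 - (Real.exp 1)⁻¹) / 2) *
          ∑ j : κ, r j * min 1 (∑ i : ι, if j ∈ S i then pc i j (S i) else 0)
        ≤ (1 - (Real.exp 1)⁻¹) * Qmin *
          ∑ j : κ, r j * min 1 (∑ i : ι, if j ∈ S i then pc i j (S i) else 0) := by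
          apply mul_le_mul_of_nonneg_right _ hsum_nonneg
          calc (1 - (Real.exp 1)⁻¹) / 2 = (1 - (Real.exp 1)⁻¹) * (1/2) := by ring
            _ ≤ (1 - (Real.exp 1)⁻¹) * Qmin := mul_le_mul_of_nonneg_left hQminhalf hee
      _ ≤ expRev pc Q r S := lower
end

section
/- In the two-sided sequential matching model, assume consumers follow MNL models with scores v_ij > 0 and each demand function Q_j : 2^N → [0,1] is monotone with Q_j(∅) = 0. For any x̂ ∈ {0,1}^{N×V} with induced assortment family S_i = {j ∈ V : x̂_ij = 1}, the point defined by ŵ_i = 1/(1 + Σ_{ℓ∈V} v_iℓ x̂_iℓ), ŷ_ij = x̂_ij·ŵ_i, and ẑ_j = min{1, Σ_{i∈N} v_ij ŷ_ij} is feasible for the LP relaxation (9), and its objective value equals Σ_{j∈V} r_j·min{1, η_j(S)} where η_j(S) = Σ_{i∈N} v_ij x̂_ij/(1 + Σ_{ℓ∈V} v_iℓ x̂_iℓ). Consequently, OPT = max over assortment families S of E[M_S] satisfies OPT ≤ OPT_LP. -/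
/-- Multinomial logit choice probabilities with scores `v`:
`p_i(j, S) = v_{ij} / (1 + ∑_{ℓ∈S} v_{iℓ})` for `j ∈ S` and `0` otherwise. -/
noncomputable def pcMNL {ι κ : Type*} [DecidableEq κ] (v : ι → κ → ℝ) (i : ι) (j : κ)
    (S : Finset κ) : ℝ :=
  if j ∈ S then v i j / (1 + ∑ ℓ ∈ S, v i ℓ) else 0

section Aux
open Finset
variable {ι : Type*} [Fintype ι] [DecidableEq ι]

lemma bern_total (p : ι → ℝ) :
    ∑ A : Finset ι, (∏ k ∈ A, p k) * ∏ k ∈ Aᶜ, (1 - p k) = 1 := by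
  have h := Finset.prod_add p (fun i => 1 - p i) (univ : Finset ι)
  simp only [add_sub_cancel, Finset.prod_const_one, Finset.powerset_univ,
    ← Finset.compl_eq_univ_sdiff] at h
  exact h.symm

lemma bern_marginal (p : ι → ℝ) (i : ι) :
    ∑ A : Finset ι, (if i ∈ A then (1:ℝ) else 0) *
      ((∏ k ∈ A, p k) * ∏ k ∈ Aᶜ, (1 - p k)) = p i := by
  classical
  have h1 : ∑ A : Finset ι, (if i ∈ A then (1:ℝ) else 0) *
      ((∏ k ∈ A, p k) * ∏ k ∈ Aᶜ, (1 - p k))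
      = ∑ A ∈ (insert i (univ.erase i)).powerset, (if i ∈ A then (1:ℝ) else 0) *
      ((∏ k ∈ A, p k) * ∏ k ∈ Aᶜ, (1 - p k)) := by
    rw [Finset.insert_erase (mem_univ i), Finset.powerset_univ]
  rw [h1, Finset.sum_powerset_insert (notMem_erase i univ)]
  have h2 : ∀ B ∈ (univ.erase i).powerset, (if i ∈ B then (1:ℝ) else 0) *
      ((∏ k ∈ B, p k) * ∏ k ∈ Bᶜ, (1 - p k)) = 0 := by
    intro B hB
    have hiB : i ∉ B := fun h => (Finset.notMem_erase i univ) (Finset.mem_powerset.1 hB h)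
    simp [hiB]
  rw [Finset.sum_congr rfl h2, Finset.sum_const_zero, zero_add]
  have h3 : ∀ B ∈ (univ.erase i).powerset, (if i ∈ insert i B then (1:ℝ) else 0) *
      ((∏ k ∈ insert i B, p k) * ∏ k ∈ (insert i B)ᶜ, (1 - p k))
      = p i * ((∏ k ∈ B, p k) * ∏ k ∈ (univ.erase i) \ B, (1 - p k)) := by
    intro B hB
    have hiB : i ∉ B := fun h => (Finset.notMem_erase i univ) (Finset.mem_powerset.1 hB h)
    have hc : (insert i B)ᶜ = (univ.erase i) \ B := by
      ext x
      simp only [Finset.mem_compl, Finset.mem_insert, Finset.mem_sdiff, Finset.mem_erase,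
        Finset.mem_univ, and_true, true_and]
      tauto
    rw [if_pos (mem_insert_self i B), Finset.prod_insert hiB, hc]
    ring
  rw [Finset.sum_congr rfl h3, ← Finset.mul_sum]
  have h4 := Finset.prod_add p (fun k => 1 - p k) (univ.erase i)
  simp only [add_sub_cancel, Finset.prod_const_one] at h4
  rw [← h4, mul_one]

lemma bern_card (p : ι → ℝ) :
    ∑ A : Finset ι, (A.card : ℝ) * ((∏ k ∈ A, p k) * ∏ k ∈ Aᶜ, (1 - p k))
      = ∑ i : ι, p i := by
  have hc : ∀ A : Finset ι, (A.card : ℝ) = ∑ i : ι, (if i ∈ A then (1:ℝ) else 0) := by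
    intro A
    rw [Finset.sum_ite_mem, Finset.univ_inter, Finset.sum_const, nsmul_eq_mul, mul_one]
  calc ∑ A : Finset ι, (A.card : ℝ) * ((∏ k ∈ A, p k) * ∏ k ∈ Aᶜ, (1 - p k))
      = ∑ A : Finset ι, ∑ i : ι, (if i ∈ A then (1:ℝ) else 0) *
          ((∏ k ∈ A, p k) * ∏ k ∈ Aᶜ, (1 - p k)) := by
        refine Finset.sum_congr rfl fun A _ => ?_
        rw [hc A, Finset.sum_mul]
    _ = ∑ i : ι, ∑ A : Finset ι, (if i ∈ A then (1:ℝ) else 0) *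
          ((∏ k ∈ A, p k) * ∏ k ∈ Aᶜ, (1 - p k)) := Finset.sum_comm
    _ = ∑ i : ι, p i := Finset.sum_congr rfl fun i _ => bern_marginal p i

lemma exp_bound (p : ι → ℝ) (hp : ∀ i, 0 ≤ p i ∧ p i ≤ 1)
    (q : Finset ι → ℝ) (hq : ∀ A, q A ∈ Set.Icc (0:ℝ) 1) (hq0 : q ∅ = 0) :
    ∑ A : Finset ι, q A * ((∏ k ∈ A, p k) * ∏ k ∈ Aᶜ, (1 - p k))
      ≤ min 1 (∑ i : ι, p i) := by
  have hw : ∀ A : Finset ι, 0 ≤ (∏ k ∈ A, p k) * ∏ k ∈ Aᶜ, (1 - p k) := fun A =>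
    mul_nonneg (Finset.prod_nonneg fun k _ => (hp k).1)
      (Finset.prod_nonneg fun k _ => by linarith [(hp k).2])
  refine le_min ?_ ?_
  · calc ∑ A : Finset ι, q A * ((∏ k ∈ A, p k) * ∏ k ∈ Aᶜ, (1 - p k))
        ≤ ∑ A : Finset ι, 1 * ((∏ k ∈ A, p k) * ∏ k ∈ Aᶜ, (1 - p k)) :=
          Finset.sum_le_sum fun A _ => mul_le_mul_of_nonneg_right (hq A).2 (hw A)
      _ = 1 := by simpa using bern_total p
  · calc ∑ A : Finset ι, q A * ((∏ k ∈ A, p k) * ∏ k ∈ Aᶜ, (1 - p k))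
        ≤ ∑ A : Finset ι, (A.card : ℝ) * ((∏ k ∈ A, p k) * ∏ k ∈ Aᶜ, (1 - p k)) := by
          refine Finset.sum_le_sum fun A _ => mul_le_mul_of_nonneg_right ?_ (hw A)
          rcases A.eq_empty_or_nonempty with h | h
          · simp [h, hq0]
          · have : (1:ℝ) ≤ A.card := by exact_mod_cast Finset.one_le_card.2 h
            linarith [(hq A).2]
      _ = ∑ i : ι, p i := bern_card p
end Aux


/-- **Lemma 3.3.** For MNL consumers, every assortment family `x̂` induces
a feasible point of the LP relaxation (9) via the Charnes–Cooper transformation, whose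
objective equals `∑_j r_j min{1, η_j(S)}`; consequently `OPT ≤ OPT_LP`. -/
theorem lp_relaxation_feasible_and_upper_bound
    {ι κ : Type*} [Fintype ι] [Fintype κ] [DecidableEq ι] [DecidableEq κ]
    (v : ι → κ → ℝ) (hv : ∀ i j, 0 < v i j)
    (Q : κ → Finset ι → ℝ)
    (hQrange : ∀ j A, Q j A ∈ Set.Icc (0 : ℝ) 1)
    (hQ0 : ∀ j, Q j ∅ = 0)
    (hQmono : ∀ j (A B : Finset ι), A ⊆ B → Q j A ≤ Q j B)
    (r : κ → ℝ) (hr : ∀ j, 0 ≤ r j)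
    (S : ι → Finset κ) :
    -- feasibility of the induced point `(ŷ, ŵ, ẑ)` for LP (9)
    (∀ j : κ, min 1 (∑ i : ι, v i j *
        ((if j ∈ S i then (1 : ℝ) else 0) * (1 / (1 + ∑ ℓ ∈ S i, v i ℓ)))) ≤ 1) ∧
    (∀ j : κ, min 1 (∑ i : ι, v i j *
        ((if j ∈ S i then (1 : ℝ) else 0) * (1 / (1 + ∑ ℓ ∈ S i, v i ℓ)))) ≤
      ∑ i : ι, v i j *
        ((if j ∈ S i then (1 : ℝ) else 0) * (1 / (1 + ∑ ℓ ∈ S i, v i ℓ)))) ∧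
    (∀ i : ι, (1 / (1 + ∑ ℓ ∈ S i, v i ℓ)) + ∑ j : κ, v i j *
        ((if j ∈ S i then (1 : ℝ) else 0) * (1 / (1 + ∑ ℓ ∈ S i, v i ℓ))) = 1) ∧
    (∀ (i : ι) (j : κ),
      0 ≤ (if j ∈ S i then (1 : ℝ) else 0) * (1 / (1 + ∑ ℓ ∈ S i, v i ℓ)) ∧
      (if j ∈ S i then (1 : ℝ) else 0) * (1 / (1 + ∑ ℓ ∈ S i, v i ℓ)) ≤
        1 / (1 + ∑ ℓ ∈ S i, v i ℓ)) ∧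
    -- the LP objective of the induced point equals `∑_j r_j min{1, η_j(S)}`
    (∑ j : κ, r j * min 1 (∑ i : ι, v i j *
        ((if j ∈ S i then (1 : ℝ) else 0) * (1 / (1 + ∑ ℓ ∈ S i, v i ℓ)))) =
      ∑ j : κ, r j * min 1
        (∑ i : ι, if j ∈ S i then v i j / (1 + ∑ ℓ ∈ S i, v i ℓ) else 0)) ∧
    -- consequently, `OPT ≤ OPT_LP`
    (∀ S' : ι → Finset κ, ∃ (y : ι → κ → ℝ) (w : ι → ℝ) (z : κ → ℝ),
      (∀ j, z j ≤ 1) ∧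
      (∀ j, z j ≤ ∑ i : ι, v i j * y i j) ∧
      (∀ i, w i + ∑ j : κ, v i j * y i j = 1) ∧
      (∀ i j, 0 ≤ y i j ∧ y i j ≤ w i) ∧
      expRev (pcMNL v) Q r S' ≤ ∑ j : κ, r j * z j) := by
  classical
  have hden : ∀ (T : ι → Finset κ) (i : ι), 0 < 1 + ∑ ℓ ∈ T i, v i ℓ := fun T i =>
    add_pos_of_pos_of_nonneg one_pos (Finset.sum_nonneg fun ℓ _ => (hv i ℓ).le)
  have key : ∀ T : ι → Finset κ,
      (∀ i : ι, (1 / (1 + ∑ ℓ ∈ T i, v i ℓ)) + ∑ j : κ, v i j *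
        ((if j ∈ T i then (1 : ℝ) else 0) * (1 / (1 + ∑ ℓ ∈ T i, v i ℓ))) = 1) := by
    intro T i
    have h1 : ∀ j : κ, v i j * ((if j ∈ T i then (1:ℝ) else 0) * (1 / (1 + ∑ ℓ ∈ T i, v i ℓ)))
        = if j ∈ T i then v i j * (1 / (1 + ∑ ℓ ∈ T i, v i ℓ)) else 0 := by
      intro j; split <;> ring
    rw [Finset.sum_congr rfl fun j _ => h1 j, Finset.sum_ite_mem, Finset.univ_inter,
      ← Finset.sum_mul]
    have := (hden T i).ne'
    field_simp
  have keq : ∀ (T : ι → Finset κ) (j : κ),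
      (∑ i : ι, v i j * ((if j ∈ T i then (1:ℝ) else 0) * (1 / (1 + ∑ ℓ ∈ T i, v i ℓ))))
        = ∑ i : ι, pcMNL v i j (T i) := by
    intro T j
    refine Finset.sum_congr rfl fun i _ => ?_
    unfold pcMNL
    split
    · rw [one_mul, mul_one_div]
    · rw [zero_mul, mul_zero]
  have hy : ∀ (T : ι → Finset κ) (i : ι) (j : κ),
      0 ≤ (if j ∈ T i then (1:ℝ) else 0) * (1 / (1 + ∑ ℓ ∈ T i, v i ℓ)) ∧
      (if j ∈ T i then (1:ℝ) else 0) * (1 / (1 + ∑ ℓ ∈ T i, v i ℓ)) ≤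
        1 / (1 + ∑ ℓ ∈ T i, v i ℓ) := by
    intro T i j
    have hw : 0 ≤ 1 / (1 + ∑ ℓ ∈ T i, v i ℓ) := one_div_nonneg.mpr (hden T i).le
    constructor
    · split
      · rw [one_mul]; exact hw
      · rw [zero_mul]
    · split
      · rw [one_mul]
      · rw [zero_mul]; exact hw
  refine ⟨fun j => min_le_left _ _, fun j => min_le_right _ _, key S, hy S, ?_, ?_⟩
  · refine Finset.sum_congr rfl fun j _ => ?_
    rw [keq S j]
    rfl
  · intro S'
    refine ⟨fun i j => (if j ∈ S' i then (1:ℝ) else 0) * (1 / (1 + ∑ ℓ ∈ S' i, v i ℓ)),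
      fun i => 1 / (1 + ∑ ℓ ∈ S' i, v i ℓ),
      fun j => min 1 (∑ i : ι, v i j * ((if j ∈ S' i then (1:ℝ) else 0) *
        (1 / (1 + ∑ ℓ ∈ S' i, v i ℓ)))),
      fun j => min_le_left _ _, fun j => min_le_right _ _, key S', hy S', ?_⟩
    unfold expRev
    dsimp only
    refine Finset.sum_le_sum fun j _ => mul_le_mul_of_nonneg_left ?_ (hr j)
    rw [keq S' j]
    refine exp_bound (fun i => pcMNL v i j (S' i)) (fun i => ?_) (Q j) (hQrange j) (hQ0 j)
    unfold pcMNL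
    by_cases h : j ∈ S' i
    · simp only [if_pos h]
      refine ⟨div_nonneg (hv i j).le (hden S' i).le, ?_⟩
      rw [div_le_one (hden S' i)]
      have := Finset.single_le_sum (f := v i) (fun ℓ _ => (hv i ℓ).le) h
      linarith
    · simp only [if_neg h]; exact ⟨le_refl 0, zero_le_one⟩
end

section
/- Let V be a finite set, and suppose v_ℓ ∈ (0,1) and y_ℓ ≥ 0 for each ℓ ∈ V and w > 0 satisfy w + Σ_{ℓ∈V} v_ℓ y_ℓ = 1 and y_ℓ ≤ w for all ℓ ∈ V. Let (X_ℓ)_{ℓ∈V} be mutually independent Bernoulli random variables with P(X_ℓ = 1) = y_ℓ/w. Then for every j ∈ V: E[X_j/(1 + Σ_{ℓ∈V} v_ℓ X_ℓ)] ≥ y_j/(1 + v_j(w − y_j)) ≥ y_j/2. -/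
open Finset

private lemma lemA {κ : Type*} [DecidableEq κ] (p : κ → ℝ) (s : Finset κ) :
    ∑ t ∈ s.powerset, (∏ ℓ ∈ t, p ℓ) * ∏ ℓ ∈ s \ t, (1 - p ℓ) = 1 := by
  rw [← Finset.prod_add]
  simp

private lemma lemB {κ : Type*} [DecidableEq κ] (p g : κ → ℝ) (s : Finset κ) :
    ∑ t ∈ s.powerset, ((∏ ℓ ∈ t, p ℓ) * ∏ ℓ ∈ s \ t, (1 - p ℓ)) * (∑ ℓ ∈ t, g ℓ)
      = ∑ ℓ ∈ s, p ℓ * g ℓ := by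
  induction s using Finset.induction_on with
  | empty => simp
  | @insert a s ha ih =>
    rw [Finset.sum_powerset_insert ha]
    have h1 : ∀ t ∈ s.powerset,
        ((∏ ℓ ∈ t, p ℓ) * ∏ ℓ ∈ insert a s \ t, (1 - p ℓ)) * (∑ ℓ ∈ t, g ℓ)
        = (1 - p a) * (((∏ ℓ ∈ t, p ℓ) * ∏ ℓ ∈ s \ t, (1 - p ℓ)) * (∑ ℓ ∈ t, g ℓ)) := by
      intro t ht
      rw [Finset.mem_powerset] at ht
      have hat : a ∉ t := fun h => ha (ht h)
      have hsd : insert a s \ t = insert a (s \ t) := by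
        ext x
        simp only [Finset.mem_sdiff, Finset.mem_insert]
        constructor
        · rintro ⟨h | h, hx⟩
          · exact Or.inl h
          · exact Or.inr ⟨h, hx⟩
        · rintro (h | ⟨h, hx⟩)
          · exact ⟨Or.inl h, by rwa [h]⟩
          · exact ⟨Or.inr h, hx⟩
      have hna : a ∉ s \ t := by simp [ha]
      rw [hsd, Finset.prod_insert hna]
      ring
    have h2 : ∀ t ∈ s.powerset,
        ((∏ ℓ ∈ insert a t, p ℓ) * ∏ ℓ ∈ insert a s \ insert a t, (1 - p ℓ))
          * (∑ ℓ ∈ insert a t, g ℓ)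
        = p a * g a * ((∏ ℓ ∈ t, p ℓ) * ∏ ℓ ∈ s \ t, (1 - p ℓ))
          + p a * (((∏ ℓ ∈ t, p ℓ) * ∏ ℓ ∈ s \ t, (1 - p ℓ)) * (∑ ℓ ∈ t, g ℓ)) := by
      intro t ht
      rw [Finset.mem_powerset] at ht
      have hat : a ∉ t := fun h => ha (ht h)
      have hsd : insert a s \ insert a t = s \ t := by
        ext x
        simp only [Finset.mem_sdiff, Finset.mem_insert, not_or]
        constructor
        · rintro ⟨h | h, hx, hx'⟩
          · exact absurd h hx
          · exact ⟨h, hx'⟩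
        · rintro ⟨h, hx⟩
          exact ⟨Or.inr h, fun he => ha (he ▸ h), hx⟩
      rw [hsd, Finset.prod_insert hat, Finset.sum_insert hat]
      ring
    rw [Finset.sum_congr rfl h1, Finset.sum_congr rfl h2, ← Finset.mul_sum, ih,
      Finset.sum_add_distrib, ← Finset.mul_sum, ← Finset.mul_sum, lemA, ih,
      Finset.sum_insert ha]
    ring

/-- **Proposition 3.5, independent rounding.** For independent Bernoulli
variables `X_ℓ` with success probabilities `y_ℓ / w` (expectation written as an explicit
sum over the possible realization sets `T`),
`E[X_j / (1 + ∑ v_ℓ X_ℓ)] ≥ y_j / (1 + v_j (w − y_j)) ≥ y_j / 2`. -/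
theorem independent_rounding_expectation_bound
    {κ : Type*} [Fintype κ] [DecidableEq κ]
    (v y : κ → ℝ) (w : ℝ)
    (hv : ∀ ℓ, 0 < v ℓ ∧ v ℓ < 1) (hy : ∀ ℓ, 0 ≤ y ℓ) (hw : 0 < w)
    (hsum : w + ∑ ℓ : κ, v ℓ * y ℓ = 1) (hyw : ∀ ℓ, y ℓ ≤ w) (j : κ) :
    y j / (1 + v j * (w - y j)) ≤
      ∑ T : Finset κ, ((∏ ℓ ∈ T, y ℓ / w) * ∏ ℓ ∈ Tᶜ, (1 - y ℓ / w)) *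
        ((if j ∈ T then (1 : ℝ) else 0) / (1 + ∑ ℓ ∈ T, v ℓ)) ∧
    y j / 2 ≤ y j / (1 + v j * (w - y j)) := by
  classical
  have hw1 : w ≤ 1 := by
    nlinarith [Finset.sum_nonneg (fun ℓ (_ : ℓ ∈ (Finset.univ : Finset κ)) =>
      mul_nonneg (hv ℓ).1.le (hy ℓ))]
  have hDpos : 0 < 1 + v j * (w - y j) := by
    nlinarith [(hv j).1, hyw j]
  constructor
  · -- main inequality
    set s0 : Finset κ := Finset.univ.erase j with hs0
    have hjs0 : j ∉ s0 := Finset.notMem_erase j _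
    have huniv : (Finset.univ : Finset κ) = insert j s0 :=
      (Finset.insert_erase (Finset.mem_univ j)).symm
    have hrhs : ∑ T : Finset κ, ((∏ ℓ ∈ T, y ℓ / w) * ∏ ℓ ∈ Tᶜ, (1 - y ℓ / w)) *
        ((if j ∈ T then (1:ℝ) else 0) / (1 + ∑ ℓ ∈ T, v ℓ))
        = (y j / w) * ∑ t ∈ s0.powerset,
            ((∏ ℓ ∈ t, y ℓ / w) * ∏ ℓ ∈ s0 \ t, (1 - y ℓ / w)) *
              (1 / (1 + v j + ∑ ℓ ∈ t, v ℓ)) := by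
      have e1 : ∑ T : Finset κ, ((∏ ℓ ∈ T, y ℓ / w) * ∏ ℓ ∈ Tᶜ, (1 - y ℓ / w)) *
          ((if j ∈ T then (1:ℝ) else 0) / (1 + ∑ ℓ ∈ T, v ℓ))
          = ∑ T ∈ (insert j s0).powerset, ((∏ ℓ ∈ T, y ℓ / w) * ∏ ℓ ∈ Tᶜ, (1 - y ℓ / w)) *
          ((if j ∈ T then (1:ℝ) else 0) / (1 + ∑ ℓ ∈ T, v ℓ)) := by
        rw [← huniv, Finset.powerset_univ]
      rw [e1, Finset.sum_powerset_insert hjs0]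
      have e2 : ∑ T ∈ s0.powerset, ((∏ ℓ ∈ T, y ℓ / w) * ∏ ℓ ∈ Tᶜ, (1 - y ℓ / w)) *
          ((if j ∈ T then (1:ℝ) else 0) / (1 + ∑ ℓ ∈ T, v ℓ)) = 0 := by
        refine Finset.sum_eq_zero fun t ht => ?_
        rw [Finset.mem_powerset] at ht
        have : j ∉ t := fun h => hjs0 (ht h)
        simp [this]
      have e3 : ∀ t ∈ s0.powerset,
          ((∏ ℓ ∈ insert j t, y ℓ / w) * ∏ ℓ ∈ (insert j t)ᶜ, (1 - y ℓ / w)) *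
            ((if j ∈ insert j t then (1:ℝ) else 0) / (1 + ∑ ℓ ∈ insert j t, v ℓ))
          = (y j / w) * (((∏ ℓ ∈ t, y ℓ / w) * ∏ ℓ ∈ s0 \ t, (1 - y ℓ / w)) *
              (1 / (1 + v j + ∑ ℓ ∈ t, v ℓ))) := by
        intro t ht
        rw [Finset.mem_powerset] at ht
        have hjt : j ∉ t := fun h => hjs0 (ht h)
        have hc : (insert j t)ᶜ = s0 \ t := by
          ext x
          simp only [Finset.mem_compl, Finset.mem_insert, not_or, Finset.mem_sdiff, hs0,
            Finset.mem_erase, Finset.mem_univ, and_true]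
          try tauto
        rw [hc, Finset.prod_insert hjt, Finset.sum_insert hjt,
          if_pos (Finset.mem_insert_self j t), ← add_assoc]
        ring
      rw [Finset.sum_congr rfl e3, e2, ← Finset.mul_sum, zero_add]
    rw [hrhs]
    -- notation
    set G : Finset κ → ℝ := fun t => (∏ ℓ ∈ t, y ℓ / w) * ∏ ℓ ∈ s0 \ t, (1 - y ℓ / w) with hG
    set a : Finset κ → ℝ := fun t => 1 + v j + ∑ ℓ ∈ t, v ℓ with ha
    have hapos : ∀ t : Finset κ, 0 < a t := by
      intro t
      have : (0:ℝ) ≤ ∑ ℓ ∈ t, v ℓ := Finset.sum_nonneg fun ℓ _ => (hv ℓ).1.le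
      have := (hv j).1
      simp only [ha]
      linarith
    have hG0 : ∀ t : Finset κ, 0 ≤ G t := by
      intro t
      refine mul_nonneg (Finset.prod_nonneg fun ℓ _ => div_nonneg (hy ℓ) hw.le)
        (Finset.prod_nonneg fun ℓ _ => ?_)
      have : y ℓ / w ≤ 1 := (div_le_one hw).2 (hyw ℓ)
      linarith
    have hA : ∑ t ∈ s0.powerset, G t = 1 := lemA (fun ℓ => y ℓ / w) s0
    have hB : ∑ t ∈ s0.powerset, G t * (∑ ℓ ∈ t, v ℓ) = ∑ ℓ ∈ s0, (y ℓ / w) * v ℓ :=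
      lemB (fun ℓ => y ℓ / w) v s0
    set M : ℝ := 1 + v j + ∑ ℓ ∈ s0, (y ℓ / w) * v ℓ with hMdef
    have hMpos : 0 < M := by
      have : (0:ℝ) ≤ ∑ ℓ ∈ s0, (y ℓ / w) * v ℓ :=
        Finset.sum_nonneg fun ℓ _ => mul_nonneg (div_nonneg (hy ℓ) hw.le) (hv ℓ).1.le
      have := (hv j).1
      simp only [hMdef]
      linarith
    have hM : ∑ t ∈ s0.powerset, G t * a t = M := by
      have : ∀ t ∈ s0.powerset, G t * a t = (1 + v j) * G t + G t * (∑ ℓ ∈ t, v ℓ) := by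
        intro t _
        simp only [ha]
        ring
      rw [Finset.sum_congr rfl this, Finset.sum_add_distrib, ← Finset.mul_sum, hA, hB, hMdef]
      ring
    have hCS : 1 ≤ (∑ t ∈ s0.powerset, G t * (1 / a t)) * M := by
      have := Finset.sum_sq_le_sum_mul_sum_of_sq_eq_mul s0.powerset
        (r := G) (f := fun t => G t * (1 / a t)) (g := fun t => G t * a t)
        (fun t _ => mul_nonneg (hG0 t) (one_div_nonneg.2 (hapos t).le))
        (fun t _ => mul_nonneg (hG0 t) (hapos t).le)
        (fun t _ => by
          have hne : a t ≠ 0 := (hapos t).ne'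
          field_simp)
      rw [hA, hM, one_pow] at this
      exact this
    have hS0 : 1 / M ≤ ∑ t ∈ s0.powerset, G t * (1 / a t) := (div_le_iff₀ hMpos).2 hCS
    have hD : 1 + v j * (w - y j) = w * M := by
      have hsub : ∑ ℓ ∈ s0, v ℓ * y ℓ = (∑ ℓ : κ, v ℓ * y ℓ) - v j * y j := by
        rw [hs0]
        exact Finset.sum_erase_eq_sub (Finset.mem_univ j)
      have hterm : ∀ ℓ ∈ s0, w * ((y ℓ / w) * v ℓ) = v ℓ * y ℓ := by
        intro ℓ _
        field_simp
      have : w * M = w + v j * w + ∑ ℓ ∈ s0, v ℓ * y ℓ := by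
        rw [hMdef, mul_add, mul_add, Finset.mul_sum, Finset.sum_congr rfl hterm]
        ring
      rw [this, hsub]
      linarith [hsum]
    calc y j / (1 + v j * (w - y j)) = (y j / w) * (1 / M) := by
          rw [hD, ← div_div, div_eq_mul_one_div (y j / w) M]
      _ ≤ (y j / w) * ∑ t ∈ s0.powerset, G t * (1 / a t) :=
          mul_le_mul_of_nonneg_left hS0 (div_nonneg (hy j) hw.le)
  · -- easy inequality
    have h2 : 1 + v j * (w - y j) ≤ 2 := by
      nlinarith [(hv j).1, (hv j).2, hy j, hyw j]
    exact div_le_div_of_nonneg_left (hy j) hDpos h2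
end

section
/- Let V be a finite set, and suppose v_ℓ ∈ (0,1) and y_ℓ ≥ 0 for each ℓ ∈ V and w > 0 satisfy w + Σ_{ℓ∈V} v_ℓ y_ℓ = 1 and y_ℓ ≤ w for all ℓ ∈ V. Let (X_ℓ)_{ℓ∈V} be {0,1}-valued random variables with P(X_ℓ = 1) = y_ℓ/w for every ℓ, and fix j ∈ V such that, whenever P(X_j = 1) > 0, the negative correlation property P(X_ℓ = 1 ∣ X_j = 1) ≤ y_ℓ/w holds for every ℓ ≠ j. Then E[X_j/(1 + Σ_{ℓ∈V} v_ℓ X_ℓ)] ≥ y_j/2. -/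
/-- **Proposition 3.7, dependent rounding.** For `{0,1}`-valued random
variables (encoded by the distribution `μ` of the random set `T = {ℓ : X_ℓ = 1}`) with
marginals `y_ℓ / w` and negative correlation with the fixed index `j`,
`E[X_j / (1 + ∑ v_ℓ X_ℓ)] ≥ y_j / 2`. -/
theorem dependent_rounding_expectation_bound
    {κ : Type*} [Fintype κ] [DecidableEq κ]
    (v y : κ → ℝ) (w : ℝ)
    (hv : ∀ ℓ, 0 < v ℓ ∧ v ℓ < 1) (hy : ∀ ℓ, 0 ≤ y ℓ) (hw : 0 < w)
    (hsum : w + ∑ ℓ : κ, v ℓ * y ℓ = 1) (hyw : ∀ ℓ, y ℓ ≤ w)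
    (μ : PMF (Finset κ))
    (hmarg : ∀ ℓ : κ, (∑ T : Finset κ, if ℓ ∈ T then (μ T).toReal else 0) = y ℓ / w)
    (j : κ)
    (hnegcor : (0 < ∑ T : Finset κ, if j ∈ T then (μ T).toReal else 0) →
      ∀ ℓ : κ, ℓ ≠ j →
        (∑ T : Finset κ, if ℓ ∈ T ∧ j ∈ T then (μ T).toReal else 0) ≤
          (y ℓ / w) * ∑ T : Finset κ, if j ∈ T then (μ T).toReal else 0) :
    y j / 2 ≤
      ∑ T : Finset κ, (μ T).toReal *
        ((if j ∈ T then (1 : ℝ) else 0) / (1 + ∑ ℓ ∈ T, v ℓ)) := by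
  have hp0 : ∀ T : Finset κ, 0 ≤ (μ T).toReal := fun T => ENNReal.toReal_nonneg
  have hs0 : ∀ T : Finset κ, 0 ≤ ∑ ℓ ∈ T, v ℓ := fun T =>
    Finset.sum_nonneg fun ℓ _ => (hv ℓ).1.le
  have hS0 : 0 ≤ ∑ T : Finset κ, (μ T).toReal *
      ((if j ∈ T then (1 : ℝ) else 0) / (1 + ∑ ℓ ∈ T, v ℓ)) := by
    apply Finset.sum_nonneg; intro T _
    apply mul_nonneg (hp0 T)
    apply div_nonneg (by split <;> norm_num) (by linarith [hs0 T])
  by_cases hyj : y j = 0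
  · rw [hyj]; simpa using hS0
  have hyjpos : 0 < y j := lt_of_le_of_ne (hy j) (Ne.symm hyj)
  have hPpos : 0 < y j / w := div_pos hyjpos hw
  have hvy0 : 0 ≤ ∑ ℓ : κ, v ℓ * y ℓ :=
    Finset.sum_nonneg fun ℓ _ => mul_nonneg (hv ℓ).1.le (hy ℓ)
  have hw1 : w ≤ 1 := by linarith
  set c : ℝ := v j + (1 - w) / w with hc
  have hc0 : 0 ≤ c := by
    have h1 : 0 ≤ (1 - w) / w := div_nonneg (by linarith) hw.le
    have := (hv j).1
    rw [hc]; linarith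
  have hc1 : (0:ℝ) < 1 + c := by linarith
  have hnc := hnegcor (by rw [hmarg j]; exact hPpos)
  set P : ℝ := y j / w with hP
  have hnc' : ∀ ℓ : κ, ℓ ≠ j →
      (∑ T : Finset κ, if ℓ ∈ T ∧ j ∈ T then (μ T).toReal else 0) ≤ (y ℓ / w) * P := by
    intro ℓ h
    have h2 := hnc ℓ h
    rwa [hmarg j] at h2
  -- the joint sum bound
  set A : ℝ := ∑ T : Finset κ, (if j ∈ T then (μ T).toReal else 0) * (∑ ℓ ∈ T, v ℓ) with hAdef
  have hA1 : A = ∑ ℓ : κ, v ℓ *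
      (∑ T : Finset κ, if ℓ ∈ T ∧ j ∈ T then (μ T).toReal else 0) := by
    rw [hAdef]
    calc ∑ T : Finset κ, (if j ∈ T then (μ T).toReal else 0) * (∑ ℓ ∈ T, v ℓ)
        = ∑ T : Finset κ, ∑ ℓ : κ,
            v ℓ * (if ℓ ∈ T ∧ j ∈ T then (μ T).toReal else 0) := by
          apply Finset.sum_congr rfl; intro T _
          rw [show (∑ ℓ ∈ T, v ℓ) = ∑ ℓ : κ, if ℓ ∈ T then v ℓ else 0 by
            rw [Finset.sum_ite_mem, Finset.univ_inter]]
          rw [Finset.mul_sum]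
          apply Finset.sum_congr rfl; intro ℓ _
          by_cases h1 : ℓ ∈ T <;> by_cases h2 : j ∈ T <;> simp [h1, h2] <;> ring
      _ = ∑ ℓ : κ, ∑ T : Finset κ,
            v ℓ * (if ℓ ∈ T ∧ j ∈ T then (μ T).toReal else 0) := Finset.sum_comm
      _ = ∑ ℓ : κ, v ℓ *
            (∑ T : Finset κ, if ℓ ∈ T ∧ j ∈ T then (μ T).toReal else 0) := by
          apply Finset.sum_congr rfl; intro ℓ _
          rw [Finset.mul_sum]
  have hJj : (∑ T : Finset κ, if j ∈ T ∧ j ∈ T then (μ T).toReal else 0) = P := by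
    simpa using hmarg j
  have hA : A ≤ P * c := by
    rw [hA1, ← Finset.add_sum_erase _ _ (Finset.mem_univ j), hJj]
    have herase : ∑ ℓ ∈ Finset.univ.erase j, v ℓ *
        (∑ T : Finset κ, if ℓ ∈ T ∧ j ∈ T then (μ T).toReal else 0)
        ≤ ∑ ℓ ∈ Finset.univ.erase j, v ℓ * ((y ℓ / w) * P) := by
      apply Finset.sum_le_sum; intro ℓ hℓ
      have hne : ℓ ≠ j := Finset.ne_of_mem_erase hℓ
      exact mul_le_mul_of_nonneg_left (hnc' ℓ hne) (hv ℓ).1.le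
    have herase2 : ∑ ℓ ∈ Finset.univ.erase j, v ℓ * ((y ℓ / w) * P)
        = (P / w) * ∑ ℓ ∈ Finset.univ.erase j, v ℓ * y ℓ := by
      rw [Finset.mul_sum]
      apply Finset.sum_congr rfl; intro ℓ _
      field_simp
    have herase3 : ∑ ℓ ∈ Finset.univ.erase j, v ℓ * y ℓ ≤ 1 - w := by
      have hle : ∑ ℓ ∈ Finset.univ.erase j, v ℓ * y ℓ ≤ ∑ ℓ : κ, v ℓ * y ℓ := by
        apply Finset.sum_le_sum_of_subset_of_nonneg (Finset.erase_subset _ _)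
        intro ℓ _ _; exact mul_nonneg (hv ℓ).1.le (hy ℓ)
      linarith
    have hPw : 0 ≤ P / w := div_nonneg hPpos.le hw.le
    have : (P / w) * ∑ ℓ ∈ Finset.univ.erase j, v ℓ * y ℓ ≤ (P / w) * (1 - w) :=
      mul_le_mul_of_nonneg_left herase3 hPw
    have hfinal : v j * P + (P / w) * (1 - w) = P * c := by
      rw [hc]; field_simp
    calc v j * P + ∑ ℓ ∈ Finset.univ.erase j, v ℓ *
          (∑ T : Finset κ, if ℓ ∈ T ∧ j ∈ T then (μ T).toReal else 0)
        ≤ v j * P + ∑ ℓ ∈ Finset.univ.erase j, v ℓ * ((y ℓ / w) * P) := by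
          linarith [herase]
      _ = v j * P + (P / w) * ∑ ℓ ∈ Finset.univ.erase j, v ℓ * y ℓ := by rw [herase2]
      _ ≤ v j * P + (P / w) * (1 - w) := by linarith [this]
      _ = P * c := hfinal
  -- pointwise tangent-line bound
  have hlow : ∀ T ∈ (Finset.univ : Finset (Finset κ)),
      (if j ∈ T then (μ T).toReal else 0) * (1 + 2*c - ∑ ℓ ∈ T, v ℓ) / (1+c)^2
        ≤ (μ T).toReal * ((if j ∈ T then (1 : ℝ) else 0) / (1 + ∑ ℓ ∈ T, v ℓ)) := by
    intro T _
    by_cases hjT : j ∈ T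
    · have h1s : (0:ℝ) < 1 + ∑ ℓ ∈ T, v ℓ := by linarith [hs0 T]
      have key : (1 + 2*c - ∑ ℓ ∈ T, v ℓ) / (1+c)^2 ≤ 1 / (1 + ∑ ℓ ∈ T, v ℓ) := by
        rw [div_le_div_iff₀ (by positivity) h1s]
        nlinarith [sq_nonneg ((∑ ℓ ∈ T, v ℓ) - c)]
      calc (if j ∈ T then (μ T).toReal else 0) * (1 + 2*c - ∑ ℓ ∈ T, v ℓ) / (1+c)^2
          = (μ T).toReal * ((1 + 2*c - ∑ ℓ ∈ T, v ℓ) / (1+c)^2) := by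
            rw [if_pos hjT]; ring
        _ ≤ (μ T).toReal * (1 / (1 + ∑ ℓ ∈ T, v ℓ)) :=
            mul_le_mul_of_nonneg_left key (hp0 T)
        _ = (μ T).toReal * ((if j ∈ T then (1 : ℝ) else 0) / (1 + ∑ ℓ ∈ T, v ℓ)) := by
            rw [if_pos hjT]
    · simp [hjT]
  have hsum2 : ∑ T : Finset κ,
      (if j ∈ T then (μ T).toReal else 0) * (1 + 2*c - ∑ ℓ ∈ T, v ℓ) / (1+c)^2
      = (P * (1 + 2*c) - A) / (1+c)^2 := by
    rw [← Finset.sum_div]; congr 1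
    have hterm : ∀ T : Finset κ,
        (if j ∈ T then (μ T).toReal else 0) * (1 + 2*c - ∑ ℓ ∈ T, v ℓ)
        = (if j ∈ T then (μ T).toReal else 0) * (1 + 2*c)
          - (if j ∈ T then (μ T).toReal else 0) * (∑ ℓ ∈ T, v ℓ) := fun T => by ring
    simp_rw [hterm]
    rw [Finset.sum_sub_distrib, ← Finset.sum_mul, hmarg j, hAdef, hP]
  have hvw : (0:ℝ) < 1 + v j * w := by nlinarith [mul_pos (hv j).1 hw]
  have hstep1 : (P * (1 + 2*c) - P * c) / (1+c)^2 = y j / (1 + v j * w) := by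
    rw [div_eq_div_iff (pow_pos hc1 2).ne' hvw.ne', hP, hc]
    field_simp
    ring
  have hvw2 : 1 + v j * w ≤ 2 := by nlinarith [(hv j).1.le, (hv j).2, hw.le, hw1]
  calc y j / 2 ≤ y j / (1 + v j * w) :=
        div_le_div_of_nonneg_left (hy j) hvw hvw2
    _ = (P * (1 + 2*c) - P * c) / (1+c)^2 := hstep1.symm
    _ ≤ (P * (1 + 2*c) - A) / (1+c)^2 := by gcongr
    _ = ∑ T : Finset κ,
          (if j ∈ T then (μ T).toReal else 0) * (1 + 2*c - ∑ ℓ ∈ T, v ℓ) / (1+c)^2 :=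
        hsum2.symm
    _ ≤ _ := Finset.sum_le_sum hlow
end

section
/- Let N be a finite set, let v_i ≥ 0 be constants, and let (Ŷ_i)_{i∈N} be mutually independent real random variables with v_i Ŷ_i ∈ [0,1] almost surely for every i ∈ N. Let z ∈ [0,1] satisfy Σ_{i∈N} v_i E[Ŷ_i] ≥ z/2. Then E[1 − ∏_{i∈N}(1 − v_i Ŷ_i)] ≥ (1 − 1/e)·z/2. -/
open MeasureTheory ProbabilityTheory

lemma exp_lin_bound {x : ℝ} (h0 : 0 ≤ x) (h1 : x ≤ 1) :
    (1 - (Real.exp 1)⁻¹) * x ≤ 1 - Real.exp (-x) := by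
  have hc := convexOn_exp.2 (Set.mem_univ (-1 : ℝ)) (Set.mem_univ (0 : ℝ))
    h0 (by linarith : (0:ℝ) ≤ 1 - x) (by ring)
  simp only [smul_eq_mul, mul_zero, add_zero, mul_neg, mul_one, Real.exp_zero] at hc
  have he : Real.exp (-1) = (Real.exp 1)⁻¹ := Real.exp_neg 1
  nlinarith [hc]

/-- For mutually independent random variables `Ŷ_i` with
`v_i Ŷ_i ∈ [0,1]` a.s. and `∑_i v_i E[Ŷ_i] ≥ z/2` with `z ∈ [0,1]`, one has
`E[1 − ∏_i (1 − v_i Ŷ_i)] ≥ (1 − 1/e)·z/2`. -/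
theorem independent_products_expectation_bound
    {ι : Type*} [Fintype ι] {Ω : Type*} [MeasurableSpace Ω]
    (μ : Measure Ω) [IsProbabilityMeasure μ]
    (v : ι → ℝ) (hv : ∀ i, 0 ≤ v i)
    (Y : ι → Ω → ℝ) (hmeas : ∀ i, Measurable (Y i))
    (hindep : iIndepFun (m := fun _ => Real.measurableSpace) Y μ)
    (hbdd : ∀ i, ∀ᵐ ω ∂μ, v i * Y i ω ∈ Set.Icc (0 : ℝ) 1)
    (z : ℝ) (hz : z ∈ Set.Icc (0 : ℝ) 1)
    (hmean : z / 2 ≤ ∑ i : ι, v i * ∫ ω, Y i ω ∂μ) :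
    (1 - (Real.exp 1)⁻¹) * z / 2 ≤
      ∫ ω, (1 - ∏ i : ι, (1 - v i * Y i ω)) ∂μ := by
  classical
  set g : ι → Ω → ℝ := fun i ω => 1 - v i * Y i ω with hgdef
  have hgmeas : ∀ i, Measurable (g i) := fun i =>
    measurable_const.sub ((hmeas i).const_mul _)
  have hgindep : iIndepFun (m := fun _ => Real.measurableSpace) g μ :=
    hindep.comp (fun i x => 1 - v i * x)
      (fun i => measurable_const.sub (measurable_id.const_mul _))
  have hgmem : ∀ i, ∀ᵐ ω ∂μ, g i ω ∈ Set.Icc (0 : ℝ) 1 := by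
    intro i
    filter_upwards [hbdd i] with ω hω
    exact ⟨by simp [hgdef]; linarith [hω.2], by simp [hgdef]; linarith [hω.1]⟩
  have hprodmem : ∀ s : Finset ι, ∀ᵐ ω ∂μ, (∏ i ∈ s, g i ω) ∈ Set.Icc (0 : ℝ) 1 := by
    intro s
    have := ae_all_iff.2 hgmem
    filter_upwards [this] with ω hω
    constructor
    · exact Finset.prod_nonneg fun i _ => (hω i).1
    · exact Finset.prod_le_one (fun i _ => (hω i).1) (fun i _ => (hω i).2)
  have hInt : ∀ s : Finset ι, Integrable (fun ω => ∏ i ∈ s, g i ω) μ := by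
    intro s
    refine (integrable_const (1 : ℝ)).mono'
      (Finset.measurable_prod s (fun i _ => hgmeas i)).aestronglyMeasurable ?_
    filter_upwards [hprodmem s] with ω hω
    rw [Real.norm_eq_abs, abs_of_nonneg hω.1]; exact hω.2
  -- product of integrals
  have hkey : ∀ s : Finset ι, ∫ ω, ∏ i ∈ s, g i ω ∂μ = ∏ i ∈ s, ∫ ω, g i ω ∂μ := by
    intro s
    induction s using Finset.induction_on with
    | empty => simp
    | insert i s hi ih =>
      have hindep2 : IndepFun (∏ j ∈ s, g j) (g i) μ :=
        hgindep.indepFun_finsetProd_of_notMem hgmeas hi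
      have hfun : (∏ j ∈ s, g j) = fun ω => ∏ j ∈ s, g j ω :=
        funext fun ω => Finset.prod_apply ω s g
      have hInt' : Integrable (∏ j ∈ s, g j) μ := by rw [hfun]; exact hInt s
      have := hindep2.integral_mul_eq_mul_integral hInt'.aestronglyMeasurable
        ((integrable_const (1:ℝ)).mono' (hgmeas i).aestronglyMeasurable
          (by filter_upwards [hgmem i] with ω hω;
              rw [Real.norm_eq_abs, abs_of_nonneg hω.1]; exact hω.2)).aestronglyMeasurable
      simp only [Finset.prod_insert hi]
      calc ∫ ω, g i ω * ∏ j ∈ s, g j ω ∂μ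
          = ∫ ω, ((∏ j ∈ s, g j) * g i) ω ∂μ := by
            congr 1; ext ω; simp [Finset.prod_apply, mul_comm]
        _ = (∫ ω, (∏ j ∈ s, g j) ω ∂μ) * ∫ ω, g i ω ∂μ := this
        _ = (∫ ω, ∏ j ∈ s, g j ω ∂μ) * ∫ ω, g i ω ∂μ := by rw [hfun]
        _ = (∫ ω, g i ω ∂μ) * ∏ j ∈ s, ∫ ω, g j ω ∂μ := by rw [ih, mul_comm]
  -- individual integrals
  set a : ι → ℝ := fun i => v i * ∫ ω, Y i ω ∂μ with hadef
  have hgint : ∀ i, ∫ ω, g i ω ∂μ = 1 - a i := by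
    intro i
    rcases eq_or_lt_of_le (hv i) with h0 | h0
    · simp [hgdef, hadef, ← h0]
    · have hYint : Integrable (Y i) μ := by
        refine (integrable_const ((v i)⁻¹ : ℝ)).mono' (hmeas i).aestronglyMeasurable ?_
        filter_upwards [hbdd i] with ω hω
        have hY0 : 0 ≤ Y i ω := by
          by_contra h; push_neg at h; nlinarith [hω.1]
        rw [Real.norm_eq_abs, abs_of_nonneg hY0,
          show (v i)⁻¹ = 1 / v i by ring, le_div_iff₀ h0]
        linarith [hω.2, mul_comm (Y i ω) (v i)]
      rw [hgdef]
      simp only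
      rw [integral_sub (integrable_const 1) (hYint.const_mul _), integral_const,
        integral_const_mul]
      simp [hadef, measure_univ]
  have hamem : ∀ i, a i ∈ Set.Icc (0 : ℝ) 1 := by
    intro i
    have h1 : (∫ ω, g i ω ∂μ) ∈ Set.Icc (0:ℝ) 1 := by
      constructor
      · exact integral_nonneg_of_ae ((hgmem i).mono fun ω h => h.1)
      · calc ∫ ω, g i ω ∂μ ≤ ∫ _, (1:ℝ) ∂μ := by
              refine integral_mono_ae ?_ (integrable_const 1)
                ((hgmem i).mono fun ω h => h.2)
              exact (integrable_const 1).mono' (hgmeas i).aestronglyMeasurable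
                (by filter_upwards [hgmem i] with ω hω;
                    rw [Real.norm_eq_abs, abs_of_nonneg hω.1]; exact hω.2)
          _ = 1 := by simp
    rw [hgint i] at h1
    exact ⟨by linarith [h1.2], by linarith [h1.1]⟩
  -- product bound
  have hprodle : ∏ i : ι, (1 - a i) ≤ Real.exp (-(z/2)) := by
    calc ∏ i : ι, (1 - a i) ≤ ∏ i : ι, Real.exp (-(a i)) := by
          refine Finset.prod_le_prod (fun i _ => by linarith [(hamem i).2]) ?_
          intro i _
          linarith [Real.add_one_le_exp (-(a i))]
      _ = Real.exp (-(∑ i : ι, a i)) := by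
          rw [← Real.exp_sum]; simp
      _ ≤ Real.exp (-(z/2)) := by
          apply Real.exp_le_exp.2; simp only [neg_le_neg_iff]; exact hmean
  -- assemble
  have hintegral : ∫ ω, (1 - ∏ i : ι, (1 - v i * Y i ω)) ∂μ
      = 1 - ∏ i : ι, (1 - a i) := by
    have : (fun ω => 1 - ∏ i : ι, (1 - v i * Y i ω)) =
        (fun ω => 1 - ∏ i : ι, g i ω) := rfl
    rw [this, integral_sub (integrable_const 1) (hInt Finset.univ), integral_const,
      hkey Finset.univ]
    simp [hgint]
  rw [hintegral]
  have hzz : 0 ≤ z / 2 ∧ z / 2 ≤ 1 := ⟨by linarith [hz.1], by linarith [hz.2]⟩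
  have := exp_lin_bound hzz.1 hzz.2
  linarith [hprodle, this]
end

section
/- In the two-sided sequential matching model, assume every supplier is easy-to-match, i.e., each demand function Q_j : 2^N → [0,1] is monotone with Q_j(∅) = 0 and Q_j({i}) ≥ 1/2 for all i ∈ N, and assume consumers follow MNL models with scores satisfying 0 < v_ij < 1. Let (y*, w*, z*) be an optimal solution of the LP relaxation (9), set x_ij = y*_ij/w*_i, and let x̂ ∈ {0,1}^{N×V} be the random vector obtained by setting x̂_ij = 1 independently across all pairs (i,j) with probability x_ij, with induced random assortment family S_i = {j ∈ V : x̂_ij = 1}. Then E_{x̂}[E[M_{S_{x̂}}]] ≥ ((1 − 1/e)/4)·max over all assortment families S' = (S'_1,…,S'_n) of E[M_{S'}]. -/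
open Finset

/-- Sum over all subsets of products equals product of sums (independent bits). -/
lemma sum_prod_compl_eq {κ : Type*} [Fintype κ] [DecidableEq κ] (f g : κ → ℝ) :
    ∑ t : Finset κ, (∏ j ∈ t, f j) * ∏ j ∈ tᶜ, g j = ∏ j : κ, (f j + g j) := by
  rw [Finset.prod_add, Finset.powerset_univ]
  exact Finset.sum_congr rfl fun t _ => by rw [Finset.compl_eq_univ_sdiff]

/-- Weierstrass product inequality. -/
lemma one_sub_sum_le_prod_one_sub' {ι : Type*} (s : Finset ι) (p : ι → ℝ)
    (h0 : ∀ i ∈ s, 0 ≤ p i) (h1 : ∀ i ∈ s, p i ≤ 1) :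
    1 - ∑ i ∈ s, p i ≤ ∏ i ∈ s, (1 - p i) := by
  induction s using Finset.cons_induction with
  | empty => simp
  | cons a s ha ih =>
    rw [Finset.prod_cons, Finset.sum_cons]
    have h0' : ∀ i ∈ s, 0 ≤ p i := fun i hi => h0 i (Finset.mem_cons_of_mem hi)
    have h1' : ∀ i ∈ s, p i ≤ 1 := fun i hi => h1 i (Finset.mem_cons_of_mem hi)
    have ih' := ih h0' h1'
    have hpa0 := h0 a (Finset.mem_cons_self a s)
    have hpa1 := h1 a (Finset.mem_cons_self a s)
    have hs0 : 0 ≤ ∑ i ∈ s, p i := Finset.sum_nonneg h0'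
    nlinarith [mul_le_mul_of_nonneg_left ih' (by linarith : (0:ℝ) ≤ 1 - p a)]

lemma exp_neg_le_affine {u : ℝ} (h0 : 0 ≤ u) (h1 : u ≤ 1) :
    Real.exp (-u) ≤ 1 - (1 - (Real.exp 1)⁻¹) * u := by
  have h := convexOn_exp.2 (Set.mem_univ (0:ℝ)) (Set.mem_univ (-1:ℝ))
    (by linarith : (0:ℝ) ≤ 1 - u) h0 (by ring)
  simp only [smul_eq_mul, mul_zero, zero_add, mul_neg, mul_one, Real.exp_zero] at h
  rw [Real.exp_neg, Real.exp_neg] at h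
  rw [Real.exp_neg]
  nlinarith [h]

/-- Key computation: `∑ A, (if A = ∅ then 0 else c) * weight A = c * (1 - ∏ (1 - p))`. -/
lemma sum_ind_weight {ι : Type*} [Fintype ι] [DecidableEq ι] (c : ℝ) (p : ι → ℝ) :
    ∑ A : Finset ι, (if A = ∅ then 0 else c) *
        ((∏ i ∈ A, p i) * ∏ i ∈ Aᶜ, (1 - p i)) =
      c * (1 - ∏ i : ι, (1 - p i)) := by
  have hsum : ∑ A : Finset ι, (∏ i ∈ A, p i) * ∏ i ∈ Aᶜ, (1 - p i) = 1 := by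
    rw [sum_prod_compl_eq]; simp
  have hstep : ∀ A : Finset ι,
      (if A = ∅ then 0 else c) * ((∏ i ∈ A, p i) * ∏ i ∈ Aᶜ, (1 - p i)) =
        c * ((∏ i ∈ A, p i) * ∏ i ∈ Aᶜ, (1 - p i)) -
          (if A = (∅ : Finset ι) then c * ((∏ i ∈ A, p i) * ∏ i ∈ Aᶜ, (1 - p i)) else 0) := by
    intro A; by_cases hA : A = ∅ <;> simp [hA]
  rw [Finset.sum_congr rfl fun A _ => hstep A, Finset.sum_sub_distrib, ← Finset.mul_sum, hsum]
  rw [Finset.sum_ite_eq' Finset.univ (∅ : Finset ι)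
    (fun A => c * ((∏ i ∈ A, p i) * ∏ i ∈ Aᶜ, (1 - p i)))]
  simp [Finset.compl_empty]
  ring

/-- Lower bound on expected demand term: easy-to-match suppliers. -/
lemma inner_lb {ι : Type*} [Fintype ι] [DecidableEq ι] (Qj : Finset ι → ℝ)
    (hQ0 : Qj ∅ = 0) (hhalf : ∀ A : Finset ι, A ≠ ∅ → 1/2 ≤ Qj A)
    (p : ι → ℝ) (h0 : ∀ i, 0 ≤ p i) (h1 : ∀ i, p i ≤ 1) :
    (1/2) * (1 - ∏ i : ι, (1 - p i)) ≤
      ∑ A : Finset ι, Qj A * ((∏ i ∈ A, p i) * ∏ i ∈ Aᶜ, (1 - p i)) := by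
  have hw : ∀ A : Finset ι, 0 ≤ (∏ i ∈ A, p i) * ∏ i ∈ Aᶜ, (1 - p i) := fun A =>
    mul_nonneg (Finset.prod_nonneg fun i _ => h0 i)
      (Finset.prod_nonneg fun i _ => by linarith [h1 i])
  calc (1/2) * (1 - ∏ i : ι, (1 - p i))
      = ∑ A : Finset ι, (if A = ∅ then 0 else (1/2 : ℝ)) *
          ((∏ i ∈ A, p i) * ∏ i ∈ Aᶜ, (1 - p i)) := (sum_ind_weight _ _).symm
    _ ≤ ∑ A : Finset ι, Qj A * ((∏ i ∈ A, p i) * ∏ i ∈ Aᶜ, (1 - p i)) := by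
        refine Finset.sum_le_sum fun A _ => mul_le_mul_of_nonneg_right ?_ (hw A)
        by_cases hA : A = ∅
        · simp [hA, hQ0]
        · simp only [if_neg hA]; exact hhalf A hA

/-- Upper bound on expected demand term. -/
lemma inner_ub {ι : Type*} [Fintype ι] [DecidableEq ι] (Qj : Finset ι → ℝ)
    (hQ0 : Qj ∅ = 0) (hQle : ∀ A, Qj A ≤ 1) (hQnn : ∀ A, 0 ≤ Qj A)
    (p : ι → ℝ) (h0 : ∀ i, 0 ≤ p i) (h1 : ∀ i, p i ≤ 1) :
    ∑ A : Finset ι, Qj A * ((∏ i ∈ A, p i) * ∏ i ∈ Aᶜ, (1 - p i)) ≤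
      min 1 (∑ i : ι, p i) := by
  have hw : ∀ A : Finset ι, 0 ≤ (∏ i ∈ A, p i) * ∏ i ∈ Aᶜ, (1 - p i) := fun A =>
    mul_nonneg (Finset.prod_nonneg fun i _ => h0 i)
      (Finset.prod_nonneg fun i _ => by linarith [h1 i])
  have hub : ∑ A : Finset ι, Qj A * ((∏ i ∈ A, p i) * ∏ i ∈ Aᶜ, (1 - p i)) ≤
      ∑ A : Finset ι, (if A = ∅ then 0 else (1 : ℝ)) *
        ((∏ i ∈ A, p i) * ∏ i ∈ Aᶜ, (1 - p i)) := by
    refine Finset.sum_le_sum fun A _ => mul_le_mul_of_nonneg_right ?_ (hw A)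
    by_cases hA : A = ∅
    · simp [hA, hQ0]
    · simp only [if_neg hA]; exact hQle A
  rw [sum_ind_weight] at hub
  refine le_min ?_ ?_
  · refine hub.trans ?_
    have := Finset.prod_nonneg (s := (Finset.univ : Finset ι))
      (f := fun i => 1 - p i) (fun i _ => by linarith [h1 i])
    linarith
  · refine hub.trans ?_
    have := one_sub_sum_le_prod_one_sub' Finset.univ p (fun i _ => h0 i) (fun i _ => h1 i)
    linarith

/-- Per-consumer bound: expected MNL choice probability under independent rounding. -/
lemma consumer_bound {κ : Type*} [Fintype κ] [DecidableEq κ]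
    (vi : κ → ℝ) (hv0 : ∀ j, 0 < vi j) (hv1 : ∀ j, vi j < 1)
    (x : κ → ℝ) (hx0 : ∀ j, 0 ≤ x j) (hx1 : ∀ j, x j ≤ 1)
    (w : ℝ) (hw0 : 0 < w) (hw1 : w ≤ 1)
    (hsum : ∑ ℓ : κ, vi ℓ * x ℓ = (1 - w) / w) (j : κ) :
    vi j * (x j * w) / 2 ≤
      ∑ t : Finset κ, ((∏ ℓ ∈ t, x ℓ) * ∏ ℓ ∈ tᶜ, (1 - x ℓ)) *
        (if j ∈ t then vi j / (1 + ∑ ℓ ∈ t, vi ℓ) else 0) := by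
  set μ : Finset κ → ℝ := fun t => (∏ ℓ ∈ t, x ℓ) * ∏ ℓ ∈ tᶜ, (1 - x ℓ) with hμdef
  have hμ0 : ∀ t, 0 ≤ μ t := fun t =>
    mul_nonneg (Finset.prod_nonneg fun ℓ _ => hx0 ℓ)
      (Finset.prod_nonneg fun ℓ _ => by linarith [hx1 ℓ])
  set W : Finset κ → ℝ := fun t => if j ∈ t then μ t else 0 with hWdef
  have hW0 : ∀ t, 0 ≤ W t := fun t => by
    by_cases h : j ∈ t <;> simp [hWdef, h, hμ0 t]
  have hden : ∀ t : Finset κ, 0 < 1 + ∑ ℓ ∈ t, vi ℓ := fun t => by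
    have : 0 ≤ ∑ ℓ ∈ t, vi ℓ := Finset.sum_nonneg fun ℓ _ => (hv0 ℓ).le
    linarith
  have hrep1 : ∀ t : Finset κ, W t =
      (∏ ℓ ∈ t, x ℓ) * ∏ ℓ ∈ tᶜ, (if ℓ = j then 0 else 1 - x ℓ) := by
    intro t
    by_cases hj : j ∈ t
    · simp only [hWdef, if_pos hj, hμdef]
      congr 1
      refine Finset.prod_congr rfl fun ℓ hℓ => ?_
      rw [if_neg]
      intro h; subst h; exact (Finset.mem_compl.mp hℓ) hj
    · simp only [hWdef, if_neg hj]
      exact (mul_eq_zero_of_right _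
        (Finset.prod_eq_zero (f := fun ℓ => if ℓ = j then (0:ℝ) else 1 - x ℓ)
          (Finset.mem_compl.mpr hj) (if_pos rfl))).symm
  have hWsum : ∑ t : Finset κ, W t = x j := by
    rw [Finset.sum_congr rfl fun t _ => hrep1 t, sum_prod_compl_eq]
    rw [Finset.prod_eq_single j (fun b _ hb => by rw [if_neg hb]; ring)
      (fun h => absurd (Finset.mem_univ j) h)]
    simp
  have hrep2 : ∀ ℓ₀ : κ, ℓ₀ ≠ j → ∀ t : Finset κ, (if ℓ₀ ∈ t then W t else 0) =
      (∏ ℓ ∈ t, x ℓ) * ∏ ℓ ∈ tᶜ, (if ℓ = j ∨ ℓ = ℓ₀ then 0 else 1 - x ℓ) := by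
    intro ℓ₀ hℓ₀ t
    by_cases hl : ℓ₀ ∈ t
    · by_cases hj : j ∈ t
      · simp only [if_pos hl, hWdef, if_pos hj, hμdef]
        congr 1
        refine Finset.prod_congr rfl fun m hm => ?_
        rw [if_neg]
        rintro (rfl | rfl)
        · exact (Finset.mem_compl.mp hm) hj
        · exact (Finset.mem_compl.mp hm) hl
      · simp only [if_pos hl, hWdef, if_neg hj]
        exact (mul_eq_zero_of_right _
          (Finset.prod_eq_zero (f := fun ℓ => if ℓ = j ∨ ℓ = ℓ₀ then (0:ℝ) else 1 - x ℓ)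
            (Finset.mem_compl.mpr hj) (if_pos (Or.inl rfl)))).symm
    · rw [if_neg hl]
      exact (mul_eq_zero_of_right _
        (Finset.prod_eq_zero (f := fun ℓ => if ℓ = j ∨ ℓ = ℓ₀ then (0:ℝ) else 1 - x ℓ)
          (Finset.mem_compl.mpr hl) (if_pos (Or.inr rfl)))).symm
  have hpair : ∀ ℓ₀ : κ, ℓ₀ ≠ j →
      ∑ t : Finset κ, (if ℓ₀ ∈ t then W t else 0) = x j * x ℓ₀ := by
    intro ℓ₀ hℓ₀
    rw [Finset.sum_congr rfl fun t _ => hrep2 ℓ₀ hℓ₀ t, sum_prod_compl_eq]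
    have hprod : ∀ m : κ, (x m + if m = j ∨ m = ℓ₀ then 0 else 1 - x m) =
        if m = j ∨ m = ℓ₀ then x m else 1 := by
      intro m; by_cases h : m = j ∨ m = ℓ₀ <;> simp [h]
    rw [Finset.prod_congr rfl fun m _ => hprod m,
      ← Finset.prod_mul_prod_compl ({j, ℓ₀} : Finset κ)]
    have h1 : ∏ m ∈ ({j, ℓ₀} : Finset κ), (if m = j ∨ m = ℓ₀ then x m else 1) = x j * x ℓ₀ := by
      rw [Finset.prod_pair (Ne.symm hℓ₀)]
      simp
    have h2 : ∏ m ∈ ({j, ℓ₀} : Finset κ)ᶜ, (if m = j ∨ m = ℓ₀ then x m else 1) = 1 := by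
      refine Finset.prod_eq_one fun m hm => ?_
      rw [if_neg]
      intro h
      apply Finset.mem_compl.mp hm
      rcases h with rfl | rfl <;> simp
    rw [h1, h2, mul_one]
  have hdiag : ∑ t : Finset κ, (if j ∈ t then W t else 0) = x j := by
    rw [← hWsum]
    refine Finset.sum_congr rfl fun t _ => ?_
    by_cases hj : j ∈ t <;> simp [hWdef, hj]
  have hB : ∑ t : Finset κ, W t * (1 + ∑ ℓ ∈ t, vi ℓ) ≤ x j * (2 / w) := by
    have hswap : ∑ t : Finset κ, W t * (∑ ℓ ∈ t, vi ℓ) =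
        ∑ ℓ : κ, vi ℓ * ∑ t : Finset κ, (if ℓ ∈ t then W t else 0) := by
      have e1 : ∀ t : Finset κ, W t * (∑ ℓ ∈ t, vi ℓ) =
          ∑ ℓ : κ, vi ℓ * (if ℓ ∈ t then W t else 0) := by
        intro t
        rw [show (∑ ℓ ∈ t, vi ℓ) = ∑ ℓ : κ, (if ℓ ∈ t then vi ℓ else 0) by
          rw [Finset.sum_ite_mem, Finset.univ_inter], Finset.mul_sum]
        refine Finset.sum_congr rfl fun ℓ _ => ?_
        by_cases h : ℓ ∈ t <;> simp [h] <;> ring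
      rw [Finset.sum_congr rfl fun t _ => e1 t, Finset.sum_comm]
      exact Finset.sum_congr rfl fun ℓ _ => (Finset.mul_sum _ _ _).symm
    have hmain : ∑ ℓ : κ, vi ℓ * ∑ t : Finset κ, (if ℓ ∈ t then W t else 0) ≤
        x j * ((1 - w) / w + 1) := by
      have e2 : ∀ ℓ : κ, vi ℓ * ∑ t : Finset κ, (if ℓ ∈ t then W t else 0) ≤
          x j * (vi ℓ * x ℓ) + (if ℓ = j then x j * vi j else 0) := by
        intro ℓ
        by_cases h : ℓ = j
        · subst h
          rw [hdiag, if_pos rfl]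
          nlinarith [mul_nonneg (hx0 ℓ) (mul_nonneg (hv0 ℓ).le (hx0 ℓ))]
        · rw [hpair ℓ h, if_neg h, add_zero]
          exact le_of_eq (by ring)
      calc ∑ ℓ : κ, vi ℓ * ∑ t : Finset κ, (if ℓ ∈ t then W t else 0)
          ≤ ∑ ℓ : κ, (x j * (vi ℓ * x ℓ) + (if ℓ = j then x j * vi j else 0)) :=
            Finset.sum_le_sum fun ℓ _ => e2 ℓ
        _ = x j * ((1 - w) / w) + x j * vi j := by
            rw [Finset.sum_add_distrib, ← Finset.mul_sum, hsum,
              Finset.sum_ite_eq' Finset.univ j (fun _ => x j * vi j),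
              if_pos (Finset.mem_univ j)]
        _ ≤ x j * ((1 - w) / w + 1) := by nlinarith [hv1 j, hx0 j]
    have hcoef : (1:ℝ) + ((1 - w) / w + 1) ≤ 2 / w := by
      rw [show (1:ℝ) + ((1 - w) / w + 1) = (1 + w) / w by field_simp; ring]
      rw [div_le_div_iff₀ hw0 hw0]
      nlinarith
    calc ∑ t : Finset κ, W t * (1 + ∑ ℓ ∈ t, vi ℓ)
        = (∑ t : Finset κ, W t) + ∑ t : Finset κ, W t * (∑ ℓ ∈ t, vi ℓ) := by
          rw [← Finset.sum_add_distrib]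
          exact Finset.sum_congr rfl fun t _ => by ring
      _ ≤ x j + x j * ((1 - w) / w + 1) := by rw [hWsum, hswap]; linarith [hmain]
      _ ≤ x j * (2 / w) := by nlinarith [hx0 j]
  have hterm : ∀ t : Finset κ, μ t * (if j ∈ t then vi j / (1 + ∑ ℓ ∈ t, vi ℓ) else 0) =
      vi j * (W t * (1 + ∑ ℓ ∈ t, vi ℓ)⁻¹) := by
    intro t
    by_cases h : j ∈ t
    · simp only [hWdef, if_pos h, div_eq_mul_inv]; ring
    · simp only [hWdef, if_neg h, mul_zero, zero_mul]
  rw [show ∑ t : Finset κ, ((∏ ℓ ∈ t, x ℓ) * ∏ ℓ ∈ tᶜ, (1 - x ℓ)) *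
        (if j ∈ t then vi j / (1 + ∑ ℓ ∈ t, vi ℓ) else 0) =
      vi j * ∑ t : Finset κ, W t * (1 + ∑ ℓ ∈ t, vi ℓ)⁻¹ by
    rw [Finset.mul_sum]; exact Finset.sum_congr rfl fun t _ => hterm t]
  by_cases hxj : x j = 0
  · rw [hxj]
    simp only [zero_mul, mul_zero, zero_div]
    exact mul_nonneg (hv0 j).le (Finset.sum_nonneg fun t _ =>
      mul_nonneg (hW0 t) (inv_nonneg.mpr (hden t).le))
  · have hxjpos : 0 < x j := lt_of_le_of_ne (hx0 j) (Ne.symm hxj)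
    have hJ := (convexOn_zpow (𝕜 := ℝ) (-1)).map_sum_le (t := Finset.univ)
      (w := fun t => W t / x j) (p := fun t => 1 + ∑ ℓ ∈ t, vi ℓ)
      (fun t _ => div_nonneg (hW0 t) hxjpos.le)
      (by rw [← Finset.sum_div, hWsum, div_self hxj])
      (fun t _ => Set.mem_Ioi.mpr (hden t))
    simp only [smul_eq_mul, zpow_neg, zpow_one] at hJ
    have hSa : ∑ t : Finset κ, W t / x j * (1 + ∑ ℓ ∈ t, vi ℓ) ≤ 2 / w := by
      have e : ∑ t : Finset κ, W t / x j * (1 + ∑ ℓ ∈ t, vi ℓ) =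
          (∑ t : Finset κ, W t * (1 + ∑ ℓ ∈ t, vi ℓ)) / x j := by
        rw [Finset.sum_div]
        exact Finset.sum_congr rfl fun t _ => by ring
      rw [e, div_le_iff₀ hxjpos]
      calc ∑ t : Finset κ, W t * (1 + ∑ ℓ ∈ t, vi ℓ) ≤ x j * (2 / w) := hB
        _ = 2 / w * x j := by ring
    have hSapos : 0 < ∑ t : Finset κ, W t / x j * (1 + ∑ ℓ ∈ t, vi ℓ) := by
      have h1 : (1:ℝ) = ∑ t : Finset κ, W t / x j := by
        rw [← Finset.sum_div, hWsum, div_self hxj]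
      have h2 : (1:ℝ) ≤ ∑ t : Finset κ, W t / x j * (1 + ∑ ℓ ∈ t, vi ℓ) := by
        rw [h1]
        refine Finset.sum_le_sum fun t _ => ?_
        have hd := hden t
        have hnn : (0:ℝ) ≤ ∑ ℓ ∈ t, vi ℓ := Finset.sum_nonneg fun ℓ _ => (hv0 ℓ).le
        nlinarith [div_nonneg (hW0 t) hxjpos.le]
      linarith
    have hinv : w / 2 ≤ (∑ t : Finset κ, W t / x j * (1 + ∑ ℓ ∈ t, vi ℓ))⁻¹ := by
      have h3 := inv_anti₀ hSapos hSa
      rwa [inv_div] at h3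
    have hfinal : x j * (w / 2) ≤ ∑ t : Finset κ, W t * (1 + ∑ ℓ ∈ t, vi ℓ)⁻¹ := by
      have e : ∑ t : Finset κ, W t * (1 + ∑ ℓ ∈ t, vi ℓ)⁻¹ =
          x j * ∑ t : Finset κ, W t / x j * (1 + ∑ ℓ ∈ t, vi ℓ)⁻¹ := by
        rw [Finset.mul_sum]
        refine Finset.sum_congr rfl fun t _ => ?_
        field_simp
      rw [e]
      calc x j * (w / 2)
          ≤ x j * (∑ t : Finset κ, W t / x j * (1 + ∑ ℓ ∈ t, vi ℓ))⁻¹ :=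
            mul_le_mul_of_nonneg_left hinv hxjpos.le
        _ ≤ x j * ∑ t : Finset κ, W t / x j * (1 + ∑ ℓ ∈ t, vi ℓ)⁻¹ :=
            mul_le_mul_of_nonneg_left hJ hxjpos.le
    calc vi j * (x j * w) / 2 = vi j * (x j * (w / 2)) := by ring
      _ ≤ vi j * ∑ t : Finset κ, W t * (1 + ∑ ℓ ∈ t, vi ℓ)⁻¹ :=
          mul_le_mul_of_nonneg_left hfinal (hv0 j).le



/-- **Theorem 3.4.** With easy-to-match suppliers and MNL consumers with
scores `v_{ij} < 1`, rounding an optimal solution of the LP relaxation (9) by independent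
randomized rounding yields a random assortment family whose expected revenue (in
expectation over the rounding) is at least `((1 − 1/e)/4)·OPT`. -/
theorem mnl_unconstrained_approximation
    {ι κ : Type*} [Fintype ι] [Fintype κ] [DecidableEq ι] [DecidableEq κ]
    (v : ι → κ → ℝ) (hv : ∀ i j, 0 < v i j ∧ v i j < 1)
    (Q : κ → Finset ι → ℝ)
    (hQrange : ∀ j A, Q j A ∈ Set.Icc (0 : ℝ) 1)
    (hQ0 : ∀ j, Q j ∅ = 0)
    (hQmono : ∀ j (A B : Finset ι), A ⊆ B → Q j A ≤ Q j B)
    (heasy : ∀ (j : κ) (i : ι), 1 / 2 ≤ Q j {i})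
    (r : κ → ℝ) (hr : ∀ j, 0 ≤ r j)
    (ystar : ι → κ → ℝ) (wstar : ι → ℝ) (zstar : κ → ℝ)
    -- `(ystar, wstar, zstar)` is feasible for LP (9)
    (hz1 : ∀ j, zstar j ≤ 1)
    (hz2 : ∀ j, zstar j ≤ ∑ i : ι, v i j * ystar i j)
    (hw : ∀ i, wstar i + ∑ j : κ, v i j * ystar i j = 1)
    (hybounds : ∀ i j, 0 ≤ ystar i j ∧ ystar i j ≤ wstar i)
    -- and optimal for LP (9)
    (hopt : ∀ (y : ι → κ → ℝ) (w : ι → ℝ) (z : κ → ℝ),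
      (∀ j, z j ≤ 1) →
      (∀ j, z j ≤ ∑ i : ι, v i j * y i j) →
      (∀ i, w i + ∑ j : κ, v i j * y i j = 1) →
      (∀ i j, 0 ≤ y i j ∧ y i j ≤ w i) →
      ∑ j : κ, r j * z j ≤ ∑ j : κ, r j * zstar j) :
    -- expected revenue over the independent randomized rounding, where `x̂_{ij} = 1`
    -- independently with probability `x_{ij} = ystar_{ij} / wstar_i`
    ∀ S' : ι → Finset κ,
      ((1 - (Real.exp 1)⁻¹) / 4) * expRev (pcMNL v) Q r S' ≤
        ∑ T : ι → Finset κ,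
          (∏ i : ι, ((∏ j ∈ T i, ystar i j / wstar i) *
            ∏ j ∈ (T i)ᶜ, (1 - ystar i j / wstar i))) *
          expRev (pcMNL v) Q r T := by
  
  intro S'
  classical
  -- basic facts about wstar
  have hwpos : ∀ i, 0 < wstar i := by
    intro i
    rcases lt_or_ge 0 (wstar i) with h | h
    · exact h
    · exfalso
      have hy0 : ∀ j, ystar i j = 0 := fun j =>
        le_antisymm ((hybounds i j).2.trans h) (hybounds i j).1
      have h1 := hw i
      rw [Finset.sum_congr rfl fun j _ => by rw [hy0 j, mul_zero]] at h1
      rw [Finset.sum_const_zero, add_zero] at h1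
      linarith
  have hwle1 : ∀ i, wstar i ≤ 1 := by
    intro i
    have h2 : 0 ≤ ∑ j : κ, v i j * ystar i j :=
      Finset.sum_nonneg fun j _ => mul_nonneg (hv i j).1.le (hybounds i j).1
    linarith [hw i]
  set x : ι → κ → ℝ := fun i j => ystar i j / wstar i with hxdef
  have hx0 : ∀ i j, 0 ≤ x i j := fun i j => div_nonneg (hybounds i j).1 (hwpos i).le
  have hx1 : ∀ i j, x i j ≤ 1 := fun i j => (div_le_one (hwpos i)).mpr (hybounds i j).2
  have hxsum : ∀ i, ∑ ℓ : κ, v i ℓ * x i ℓ = (1 - wstar i) / wstar i := by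
    intro i
    have h1 : ∑ ℓ : κ, v i ℓ * x i ℓ = (∑ ℓ : κ, v i ℓ * ystar i ℓ) / wstar i := by
      rw [Finset.sum_div]
      exact Finset.sum_congr rfl fun ℓ _ => by rw [hxdef]; ring
    rw [h1, show (∑ ℓ : κ, v i ℓ * ystar i ℓ) = 1 - wstar i by linarith [hw i]]
  -- pcMNL range
  have hpcden : ∀ i (t : Finset κ), 0 < 1 + ∑ ℓ ∈ t, v i ℓ := by
    intro i t
    have : 0 ≤ ∑ ℓ ∈ t, v i ℓ := Finset.sum_nonneg fun ℓ _ => (hv i ℓ).1.le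
    linarith
  have hpc0 : ∀ i j (t : Finset κ), 0 ≤ pcMNL v i j t := by
    intro i j t
    by_cases h : j ∈ t <;>
      simp [pcMNL, h, div_nonneg (hv i j).1.le (hpcden i t).le]
  have hpc1 : ∀ i j (t : Finset κ), pcMNL v i j t ≤ 1 := by
    intro i j t
    by_cases h : j ∈ t
    · simp only [pcMNL, if_pos h]
      rw [div_le_one (hpcden i t)]
      have : 0 ≤ ∑ ℓ ∈ t, v i ℓ := Finset.sum_nonneg fun ℓ _ => (hv i ℓ).1.le
      linarith [(hv i j).2]
    · simp [pcMNL, h]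
  -- rounding distribution
  set μ : ι → Finset κ → ℝ :=
    fun i t => (∏ j ∈ t, x i j) * ∏ j ∈ tᶜ, (1 - x i j) with hμdef
  have hμ0 : ∀ i t, 0 ≤ μ i t := fun i t =>
    mul_nonneg (Finset.prod_nonneg fun ℓ _ => hx0 i ℓ)
      (Finset.prod_nonneg fun ℓ _ => by linarith [hx1 i ℓ])
  have hμsum : ∀ i, ∑ t : Finset κ, μ i t = 1 := by
    intro i
    rw [hμdef]
    rw [sum_prod_compl_eq (x i) (fun j => 1 - x i j)]
    simp
  set q : κ → ι → ℝ := fun j i => ∑ t : Finset κ, μ i t * pcMNL v i j t with hqdef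
  have hq0 : ∀ j i, 0 ≤ q j i := fun j i =>
    Finset.sum_nonneg fun t _ => mul_nonneg (hμ0 i t) (hpc0 i j t)
  have hq1 : ∀ j i, q j i ≤ 1 := by
    intro j i
    calc q j i ≤ ∑ t : Finset κ, μ i t * 1 :=
          Finset.sum_le_sum fun t _ =>
            mul_le_mul_of_nonneg_left (hpc1 i j t) (hμ0 i t)
      _ = ∑ t : Finset κ, μ i t := Finset.sum_congr rfl fun t _ => mul_one _
      _ = 1 := hμsum i
  have hqlb : ∀ j i, v i j * ystar i j / 2 ≤ q j i := by
    intro j i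
    have hcb := consumer_bound (v i) (fun ℓ => (hv i ℓ).1) (fun ℓ => (hv i ℓ).2)
      (x i) (hx0 i) (hx1 i) (wstar i) (hwpos i) (hwle1 i) (hxsum i) j
    have hxw : x i j * wstar i = ystar i j := div_mul_cancel₀ _ (ne_of_gt (hwpos i))
    rw [hxw] at hcb
    exact hcb
  -- factorization over function type
  have hfact : ∀ g : ι → Finset κ → ℝ,
      ∑ T : ι → Finset κ, ∏ i, g i (T i) = ∏ i, ∑ t : Finset κ, g i t := by
    intro g
    rw [← Finset.sum_prod_piFinset Finset.univ g, Fintype.piFinset_univ]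
  -- per supplier expected inner term
  have hEj : ∀ j : κ, (1/2) * (1 - ∏ i, (1 - q j i)) ≤
      ∑ T : ι → Finset κ, (∏ i, μ i (T i)) *
        (∑ A : Finset ι, Q j A * ((∏ i ∈ A, pcMNL v i j (T i)) *
          ∏ i ∈ Aᶜ, (1 - pcMNL v i j (T i)))) := by
    intro j
    have heq : ∑ T : ι → Finset κ, (∏ i, μ i (T i)) *
        ((1/2) * (1 - ∏ i, (1 - pcMNL v i j (T i)))) =
        (1/2) * (1 - ∏ i, (1 - q j i)) := by
      have e : ∀ T : ι → Finset κ, (∏ i, μ i (T i)) *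
          ((1/2) * (1 - ∏ i, (1 - pcMNL v i j (T i)))) =
          (1/2) * (∏ i, μ i (T i)) -
            (1/2) * ∏ i, (μ i (T i) * (1 - pcMNL v i j (T i))) := by
        intro T
        rw [show ∏ i, (μ i (T i) * (1 - pcMNL v i j (T i))) =
            (∏ i, μ i (T i)) * ∏ i, (1 - pcMNL v i j (T i)) from Finset.prod_mul_distrib]
        ring
      have h3 : ∀ i, ∑ t : Finset κ, μ i t * (1 - pcMNL v i j t) = 1 - q j i := by
        intro i
        have e2 : ∀ t : Finset κ, μ i t * (1 - pcMNL v i j t) =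
            μ i t - μ i t * pcMNL v i j t := fun t => by ring
        rw [Finset.sum_congr rfl fun t _ => e2 t, Finset.sum_sub_distrib, hμsum i, hqdef]
      have hA1 : ∑ T : ι → Finset κ, ∏ i, μ i (T i) = 1 := by
        rw [hfact fun i t => μ i t, Finset.prod_congr rfl fun i _ => hμsum i]
        simp
      have hA2 : ∑ T : ι → Finset κ, ∏ i, (μ i (T i) * (1 - pcMNL v i j (T i))) =
          ∏ i, (1 - q j i) := by
        rw [hfact fun i t => μ i t * (1 - pcMNL v i j t)]
        exact Finset.prod_congr rfl fun i _ => h3 i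
      calc ∑ T : ι → Finset κ, (∏ i, μ i (T i)) *
            ((1/2) * (1 - ∏ i, (1 - pcMNL v i j (T i))))
          = (1/2) * (∑ T : ι → Finset κ, ∏ i, μ i (T i)) -
            (1/2) * ∑ T : ι → Finset κ, ∏ i, (μ i (T i) * (1 - pcMNL v i j (T i))) := by
            rw [Finset.sum_congr rfl fun T _ => e T, Finset.sum_sub_distrib,
              ← Finset.mul_sum, ← Finset.mul_sum]
        _ = (1/2) * (1 - ∏ i, (1 - q j i)) := by rw [hA1, hA2]; ring
    rw [← heq]
    refine Finset.sum_le_sum fun T _ => ?_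
    refine mul_le_mul_of_nonneg_left ?_ (Finset.prod_nonneg fun i _ => hμ0 i (T i))
    refine inner_lb (Q j) (hQ0 j) ?_ (fun i => pcMNL v i j (T i))
      (fun i => hpc0 i j (T i)) (fun i => hpc1 i j (T i))
    intro A hA
    obtain ⟨i, hi⟩ := Finset.nonempty_of_ne_empty hA
    exact (heasy j i).trans (hQmono j {i} A (Finset.singleton_subset_iff.mpr hi))
  -- exponential bound on the product
  have hprod_le : ∀ j : κ, ∏ i, (1 - q j i) ≤
      Real.exp (-((∑ i, v i j * ystar i j) / 2)) := by
    intro j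
    calc ∏ i, (1 - q j i) ≤ ∏ i, Real.exp (-(v i j * ystar i j / 2)) := by
          refine Finset.prod_le_prod (fun i _ => by linarith [hq1 j i]) (fun i _ => ?_)
          have h := Real.add_one_le_exp (-(v i j * ystar i j / 2))
          linarith [hqlb j i]
      _ = Real.exp (∑ i, -(v i j * ystar i j / 2)) := (Real.exp_sum _ _).symm
      _ = Real.exp (-((∑ i, v i j * ystar i j) / 2)) := by
          congr 1
          rw [Finset.sum_neg_distrib, ← Finset.sum_div]
  -- key inequality per supplier
  have hexp1 : (1:ℝ) ≤ Real.exp 1 := by linarith [Real.add_one_le_exp 1]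
  have hEinv : (Real.exp 1)⁻¹ ≤ 1 := by
    have h := inv_mul_cancel₀ (Real.exp_pos 1).ne'
    nlinarith [inv_nonneg.mpr (Real.exp_pos 1).le]
  have hkey : ∀ j : κ, (1 - (Real.exp 1)⁻¹) / 4 * zstar j ≤
      (1/2) * (1 - ∏ i, (1 - q j i)) := by
    intro j
    have hs0 : 0 ≤ ∑ i, v i j * ystar i j :=
      Finset.sum_nonneg fun i _ => mul_nonneg (hv i j).1.le (hybounds i j).1
    have hP := hprod_le j
    by_cases hz : zstar j ≤ 0
    · have h4 : Real.exp (-((∑ i, v i j * ystar i j) / 2)) ≤ 1 := by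
        rw [Real.exp_le_one_iff]
        linarith
      nlinarith [mul_nonneg (inv_nonneg.mpr (Real.exp_pos 1).le) (neg_nonneg.mpr hz)]
    · push_neg at hz
      have hu0 : 0 ≤ zstar j / 2 := by linarith
      have hu1 : zstar j / 2 ≤ 1 := by linarith [hz1 j]
      have h5 := exp_neg_le_affine hu0 hu1
      have h6 : Real.exp (-((∑ i, v i j * ystar i j) / 2)) ≤
          Real.exp (-(zstar j / 2)) := Real.exp_le_exp.mpr (by linarith [hz2 j])
      nlinarith
  -- rearrange RHS
  have hRHS : ∑ T : ι → Finset κ, (∏ i, μ i (T i)) * expRev (pcMNL v) Q r T =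
      ∑ j : κ, r j * ∑ T : ι → Finset κ, (∏ i, μ i (T i)) *
        (∑ A : Finset ι, Q j A * ((∏ i ∈ A, pcMNL v i j (T i)) *
          ∏ i ∈ Aᶜ, (1 - pcMNL v i j (T i)))) := by
    simp only [expRev]
    rw [Finset.sum_congr rfl fun T (_ : T ∈ Finset.univ) => Finset.mul_sum _ _ _,
      Finset.sum_comm]
    refine Finset.sum_congr rfl fun j _ => ?_
    rw [Finset.mul_sum]
    exact Finset.sum_congr rfl fun T _ => by ring
  -- lower bound for the RHS
  have hRHSlb : ((1 - (Real.exp 1)⁻¹) / 4) * ∑ j : κ, r j * zstar j ≤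
      ∑ T : ι → Finset κ, (∏ i, μ i (T i)) * expRev (pcMNL v) Q r T := by
    rw [hRHS, Finset.mul_sum]
    refine Finset.sum_le_sum fun j _ => ?_
    calc (1 - (Real.exp 1)⁻¹) / 4 * (r j * zstar j)
        = r j * ((1 - (Real.exp 1)⁻¹) / 4 * zstar j) := by ring
      _ ≤ r j * ((1/2) * (1 - ∏ i, (1 - q j i))) :=
          mul_le_mul_of_nonneg_left (hkey j) (hr j)
      _ ≤ r j * ∑ T : ι → Finset κ, (∏ i, μ i (T i)) *
            (∑ A : Finset ι, Q j A * ((∏ i ∈ A, pcMNL v i j (T i)) *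
              ∏ i ∈ Aᶜ, (1 - pcMNL v i j (T i)))) :=
          mul_le_mul_of_nonneg_left (hEj j) (hr j)
  -- LP feasible point from S'
  set w' : ι → ℝ := fun i => (1 + ∑ ℓ ∈ S' i, v i ℓ)⁻¹ with hw'def
  set y' : ι → κ → ℝ := fun i j => if j ∈ S' i then w' i else 0 with hy'def
  set z' : κ → ℝ := fun j => min 1 (∑ i, pcMNL v i j (S' i)) with hz'def
  have hden' : ∀ i, 0 < 1 + ∑ ℓ ∈ S' i, v i ℓ := fun i => hpcden i (S' i)
  have hw'pos : ∀ i, 0 < w' i := fun i => inv_pos.mpr (hden' i)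
  have hvy' : ∀ i j, v i j * y' i j = pcMNL v i j (S' i) := by
    intro i j
    by_cases h : j ∈ S' i
    · simp only [hy'def, hw'def, pcMNL, if_pos h, div_eq_mul_inv]
    · simp [hy'def, pcMNL, h]
  have hsumy' : ∀ i, ∑ j : κ, v i j * y' i j = (∑ j ∈ S' i, v i j) * w' i := by
    intro i
    calc ∑ j : κ, v i j * y' i j
        = ∑ j : κ, (if j ∈ S' i then v i j * w' i else 0) := by
          refine Finset.sum_congr rfl fun j _ => ?_
          by_cases h : j ∈ S' i <;> simp [hy'def, h]
      _ = ∑ j ∈ S' i, v i j * w' i := by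
          rw [Finset.sum_ite_mem, Finset.univ_inter]
      _ = (∑ j ∈ S' i, v i j) * w' i := (Finset.sum_mul _ _ _).symm
  have hfeas := hopt y' w' z'
    (fun j => min_le_left _ _)
    (fun j => by
      rw [Finset.sum_congr rfl fun i _ => hvy' i j]
      exact min_le_right _ _)
    (fun i => by
      rw [hsumy' i, hw'def]
      field_simp
      rw [div_self (hden' i).ne'])
    (fun i j => by
      constructor
      · by_cases h : j ∈ S' i <;> simp [hy'def, h, (hw'pos i).le]
      · by_cases h : j ∈ S' i <;> simp [hy'def, h, (hw'pos i).le])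
  -- upper bound for the LHS
  have hLHS : expRev (pcMNL v) Q r S' ≤ ∑ j : κ, r j * zstar j := by
    refine le_trans ?_ hfeas
    simp only [expRev]
    refine Finset.sum_le_sum fun j _ => ?_
    refine mul_le_mul_of_nonneg_left ?_ (hr j)
    exact inner_ub (Q j) (hQ0 j) (fun A => (hQrange j A).2) (fun A => (hQrange j A).1)
      (fun i => pcMNL v i j (S' i)) (fun i => hpc0 i j (S' i)) (fun i => hpc1 i j (S' i))
  calc ((1 - (Real.exp 1)⁻¹) / 4) * expRev (pcMNL v) Q r S'
      ≤ ((1 - (Real.exp 1)⁻¹) / 4) * ∑ j : κ, r j * zstar j :=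
        mul_le_mul_of_nonneg_left hLHS (by linarith)
    _ ≤ ∑ T : ι → Finset κ, (∏ i, μ i (T i)) * expRev (pcMNL v) Q r T := hRHSlb
end

section
/- In the two-sided sequential matching model, assume each supplier j follows a multinomial logit model, i.e., Q_j(A) = (Σ_{k∈A} u_jk)/(u_j0 + Σ_{k∈A} u_jk) for A ⊆ N, where u_jk > 0 for all k ∈ N and u_j0 > 0. Then for every assortment family S = (S_1,…,S_n): E[M_S] ≤ Σ_{j∈V} r_j·μ_j(S)/(u_j0 + μ_j(S)), where μ_j(S) = Σ_{i∈N} u_ji·p_i(j,S_i)·1{j ∈ S_i}. -/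
private lemma sum_w {ι : Type*} [Fintype ι] [DecidableEq ι] (q : ι → ℝ) :
    ∑ A : Finset ι, (∏ i ∈ A, q i) * ∏ i ∈ Aᶜ, (1 - q i) = 1 := by
  have h := Finset.prod_add q (fun i => 1 - q i) (Finset.univ : Finset ι)
  have h1 : ∀ i : ι, q i + (1 - q i) = 1 := fun i => by ring
  simp only [h1, Finset.prod_const_one, Finset.powerset_univ] at h
  simp only [Finset.compl_eq_univ_sdiff]
  exact h.symm

private lemma sum_w_mem {ι : Type*} [Fintype ι] [DecidableEq ι] (q : ι → ℝ) (k : ι) :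
    ∑ A : Finset ι, (if k ∈ A then (∏ i ∈ A, q i) * ∏ i ∈ Aᶜ, (1 - q i) else 0)
      = q k := by
  classical
  set s : Finset ι := Finset.univ.erase k with hs
  have hk : k ∉ s := Finset.notMem_erase k _
  have huniv : insert k s = Finset.univ := by
    simp [hs, Finset.insert_erase (Finset.mem_univ k)]
  have hpow : (Finset.univ : Finset (Finset ι)) = (insert k s).powerset := by
    rw [huniv, Finset.powerset_univ]
  rw [hpow, Finset.sum_powerset_insert hk]
  have hz : ∑ t ∈ s.powerset,
      (if k ∈ t then (∏ i ∈ t, q i) * ∏ i ∈ tᶜ, (1 - q i) else 0) = 0 := by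
    apply Finset.sum_eq_zero
    intro t ht
    have : k ∉ t := fun hkt => hk (Finset.mem_powerset.mp ht hkt)
    simp [this]
  rw [hz, zero_add]
  have hterm : ∀ t ∈ s.powerset,
      (if k ∈ insert k t then (∏ i ∈ insert k t, q i) * ∏ i ∈ (insert k t)ᶜ, (1 - q i) else 0)
        = q k * ((∏ i ∈ t, q i) * ∏ i ∈ s \ t, (1 - q i)) := by
    intro t ht
    have htk : k ∉ t := fun hkt => hk (Finset.mem_powerset.mp ht hkt)
    have hcompl : (insert k t)ᶜ = s \ t := by
      ext x
      simp [hs, Finset.mem_erase, Finset.mem_sdiff, Finset.mem_insert, not_or,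
        and_comm]
    rw [if_pos (Finset.mem_insert_self k t), Finset.prod_insert htk, hcompl]
    ring
  rw [Finset.sum_congr rfl hterm, ← Finset.mul_sum]
  have h := Finset.prod_add q (fun i => 1 - q i) s
  have h1 : ∀ i : ι, q i + (1 - q i) = 1 := fun i => by ring
  simp only [h1, Finset.prod_const_one] at h
  rw [← h, mul_one]

private lemma sum_wT {ι : Type*} [Fintype ι] [DecidableEq ι] (q : ι → ℝ) (u : ι → ℝ) :
    ∑ A : Finset ι, ((∏ i ∈ A, q i) * ∏ i ∈ Aᶜ, (1 - q i)) * (∑ k ∈ A, u k)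
      = ∑ k : ι, u k * q k := by
  classical
  have hsumA : ∀ A : Finset ι, (∑ k ∈ A, u k) = ∑ k : ι, (if k ∈ A then u k else 0) := by
    intro A
    rw [Finset.sum_ite_mem, Finset.univ_inter]
  calc ∑ A : Finset ι, ((∏ i ∈ A, q i) * ∏ i ∈ Aᶜ, (1 - q i)) * (∑ k ∈ A, u k)
      = ∑ A : Finset ι, ∑ k : ι,
          u k * (if k ∈ A then (∏ i ∈ A, q i) * ∏ i ∈ Aᶜ, (1 - q i) else 0) := by
        apply Finset.sum_congr rfl
        intro A _
        rw [hsumA, Finset.mul_sum]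
        apply Finset.sum_congr rfl
        intro k _
        split_ifs <;> ring
    _ = ∑ k : ι, u k * ∑ A : Finset ι,
          (if k ∈ A then (∏ i ∈ A, q i) * ∏ i ∈ Aᶜ, (1 - q i) else 0) := by
        rw [Finset.sum_comm]
        simp [Finset.mul_sum]
    _ = ∑ k : ι, u k * q k := by
        apply Finset.sum_congr rfl
        intro k _
        rw [sum_w_mem]

/-- **Lemma 3.9.** When each supplier `j` follows a multinomial logit
model with scores `u_{jk} > 0` and outside-option score `u_{j0} > 0`, the expected
revenue of any assortment family is at most
`∑_j r_j · μ_j(S) / (u_{j0} + μ_j(S))`, where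
`μ_j(S) = ∑_i u_{ji} p_i(j, S_i) 1{j ∈ S_i}`. -/
theorem mnl_supplier_upper_bound
    {ι κ : Type*} [Fintype ι] [Fintype κ] [DecidableEq ι] [DecidableEq κ]
    (pc : ι → κ → Finset κ → ℝ)
    (hpc0 : ∀ i j S, 0 ≤ pc i j S)
    (hpcoff : ∀ (i : ι) (j : κ) (S : Finset κ), j ∉ S → pc i j S = 0)
    (hpcsum : ∀ (i : ι) (S : Finset κ), ∑ j ∈ S, pc i j S ≤ 1)
    (u : κ → ι → ℝ) (hu : ∀ j k, 0 < u j k)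
    (u0 : κ → ℝ) (hu0 : ∀ j, 0 < u0 j)
    (r : κ → ℝ) (hr : ∀ j, 0 ≤ r j)
    (S : ι → Finset κ) :
    expRev pc (fun j A => (∑ k ∈ A, u j k) / (u0 j + ∑ k ∈ A, u j k)) r S ≤
      ∑ j : κ, r j *
        ((∑ i : ι, u j i * (if j ∈ S i then pc i j (S i) else 0)) /
          (u0 j + ∑ i : ι, u j i * (if j ∈ S i then pc i j (S i) else 0))) := by
  unfold expRev
  apply Finset.sum_le_sum
  intro j _
  set q : ι → ℝ := fun i => pc i j (S i) with hq
  -- rewrite RHS μ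
  have hμeq : (∑ i : ι, u j i * (if j ∈ S i then pc i j (S i) else 0))
      = ∑ i : ι, u j i * q i := by
    apply Finset.sum_congr rfl
    intro i _
    by_cases h : j ∈ S i
    · simp [h, hq]
    · simp [h, hq, hpcoff i j (S i) h]
  rw [hμeq]
  set μ : ℝ := ∑ i : ι, u j i * q i with hμ
  set a : ℝ := u0 j with ha
  have hq0 : ∀ i, 0 ≤ q i := fun i => hpc0 i j (S i)
  have hq1 : ∀ i, q i ≤ 1 := by
    intro i
    by_cases h : j ∈ S i
    · calc q i ≤ ∑ j' ∈ S i, pc i j' (S i) :=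
          Finset.single_le_sum (fun j' _ => hpc0 i j' (S i)) h
        _ ≤ 1 := hpcsum i (S i)
    · simp [hq, hpcoff i j (S i) h]
  have hμ0 : 0 ≤ μ :=
    Finset.sum_nonneg fun i _ => mul_nonneg (hu j i).le (hq0 i)
  have ha0 : 0 < a := hu0 j
  have haμ : 0 < a + μ := by linarith
  apply mul_le_mul_of_nonneg_left _ (hr j)
  have hw0 : ∀ A : Finset ι, 0 ≤ (∏ i ∈ A, q i) * ∏ i ∈ Aᶜ, (1 - q i) := by
    intro A
    apply mul_nonneg
    · exact Finset.prod_nonneg fun i _ => hq0 i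
    · exact Finset.prod_nonneg fun i _ => by linarith [hq1 i]
  calc ∑ A : Finset ι,
        (∑ k ∈ A, u j k) / (a + ∑ k ∈ A, u j k) *
          ((∏ i ∈ A, q i) * ∏ i ∈ Aᶜ, (1 - q i))
      ≤ ∑ A : Finset ι,
        (μ ^ 2 + a * ∑ k ∈ A, u j k) / (a + μ) ^ 2 *
          ((∏ i ∈ A, q i) * ∏ i ∈ Aᶜ, (1 - q i)) := by
        apply Finset.sum_le_sum
        intro A _
        apply mul_le_mul_of_nonneg_right _ (hw0 A)
        set T : ℝ := ∑ k ∈ A, u j k with hT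
        have hT0 : 0 ≤ T := Finset.sum_nonneg fun k _ => (hu j k).le
        rw [div_le_div_iff₀ (by linarith) (by positivity)]
        nlinarith [mul_nonneg ha0.le (sq_nonneg (T - μ))]
    _ = (μ ^ 2 * (∑ A : Finset ι, (∏ i ∈ A, q i) * ∏ i ∈ Aᶜ, (1 - q i))
          + a * ∑ A : Finset ι,
              ((∏ i ∈ A, q i) * ∏ i ∈ Aᶜ, (1 - q i)) * (∑ k ∈ A, u j k))
          / (a + μ) ^ 2 := by
        rw [Finset.mul_sum, Finset.mul_sum, ← Finset.sum_add_distrib,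
          Finset.sum_div]
        apply Finset.sum_congr rfl
        intro A _
        ring
    _ = μ / (a + μ) := by
        rw [sum_w, sum_wT]
        rw [← hμ]
        field_simp
        ring
end

section
/- Let U_0, U_1, …, U_n be real-valued random variables on a common probability space such that P(U_i = U_k) = 0 for all i ≠ k in {0,1,…,n}. For C ⊆ {1,…,n} define the demand function Q(C) = P(there exists i ∈ C with U_i = max{U_k : k ∈ C ∪ {0}}). Then Q is monotone nondecreasing and submodular on subsets of {1,…,n}. -/
open MeasureTheory

/-- The demand function of a random-utility-based choice model is
monotone nondecreasing and submodular: with utilities `U_0, U_1, …, U_n` having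
pairwise-ties of probability zero, setting
`Q(C) = P(∃ i ∈ C, U_i = max{U_k : k ∈ C ∪ {0}})` gives a monotone submodular set
function on subsets of `{1,…,n}`. -/
theorem rum_demand_monotone_submodular
    {Ω : Type*} [MeasurableSpace Ω] (μ : Measure Ω) [IsProbabilityMeasure μ]
    (n : ℕ) (U : Fin (n + 1) → Ω → ℝ) (hU : ∀ k, Measurable (U k))
    (hties : ∀ i k : Fin (n + 1), i ≠ k → μ {ω | U i ω = U k ω} = 0)
    (Q : Finset (Fin n) → ℝ)
    (hQ : ∀ C : Finset (Fin n),
      Q C = (μ {ω | ∃ i ∈ C,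
        ∀ k ∈ insert (0 : Fin (n + 1)) (C.image Fin.succ), U k ω ≤ U i.succ ω}).toReal) :
    (∀ A B : Finset (Fin n), A ⊆ B → Q A ≤ Q B) ∧
    (∀ (A B : Finset (Fin n)) (e : Fin n), A ⊆ B → e ∉ B →
      Q (insert e B) - Q B ≤ Q (insert e A) - Q A) := by
  classical
  -- The simpler event: some alternative in `C` beats the outside option `0`.
  set S : Finset (Fin n) → Set Ω := fun C => {ω | ∃ i ∈ C, U 0 ω < U i.succ ω} with hS
  have hSeq : ∀ C : Finset (Fin n), S C = ⋃ i ∈ C, {ω | U 0 ω < U i.succ ω} := by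
    intro C; ext ω; simp [hS]
  have hSmeas : ∀ C : Finset (Fin n), MeasurableSet (S C) := by
    intro C
    rw [hSeq]
    exact MeasurableSet.biUnion C.countable_toSet
      (fun i _ => measurableSet_lt (hU 0) (hU i.succ))
  -- The union of all tie events is null.
  set N : Set Ω := ⋃ i, ⋃ k, ⋃ (_ : i ≠ k), {ω | U i ω = U k ω} with hN
  have hNnull : μ N = 0 :=
    measure_iUnion_null fun i => measure_iUnion_null fun k =>
      measure_iUnion_null fun h => hties i k h
  -- Q C equals the measure of S C.
  have hQS : ∀ C : Finset (Fin n), Q C = (μ (S C)).toReal := by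
    intro C
    rw [hQ C]
    congr 1
    refine le_antisymm ?_ ?_
    · -- E ⊆ S ∪ N
      have hsub : {ω | ∃ i ∈ C,
          ∀ k ∈ insert (0 : Fin (n + 1)) (C.image Fin.succ), U k ω ≤ U i.succ ω}
          ⊆ S C ∪ N := by
        intro ω hω
        obtain ⟨i, hiC, hi⟩ := hω
        have h0 : U 0 ω ≤ U i.succ ω := hi 0 (Finset.mem_insert_self _ _)
        rcases lt_or_eq_of_le h0 with hlt | heq
        · exact Or.inl ⟨i, hiC, hlt⟩
        · refine Or.inr ?_
          rw [hN]
          refine Set.mem_iUnion.2 ⟨0, Set.mem_iUnion.2 ⟨i.succ, Set.mem_iUnion.2 ⟨?_, heq⟩⟩⟩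
          exact (Fin.succ_ne_zero i).symm
      calc μ _ ≤ μ (S C ∪ N) := measure_mono hsub
        _ ≤ μ (S C) + μ N := measure_union_le _ _
        _ = μ (S C) := by rw [hNnull, add_zero]
    · -- S ⊆ E
      refine measure_mono ?_
      intro ω hω
      obtain ⟨i, hiC, hi⟩ := hω
      obtain ⟨j, hjC, hj⟩ := C.exists_max_image (fun a => U a.succ ω) ⟨i, hiC⟩
      refine ⟨j, hjC, ?_⟩
      intro k hk
      rcases Finset.mem_insert.1 hk with rfl | hk
      · exact le_trans hi.le (hj i hiC)
      · obtain ⟨a, haC, rfl⟩ := Finset.mem_image.1 hk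
        exact hj a haC
  have hmono : ∀ A B : Finset (Fin n), A ⊆ B → S A ⊆ S B := by
    intro A B hAB ω hω
    obtain ⟨i, hiA, hi⟩ := hω
    exact ⟨i, hAB hiA, hi⟩
  constructor
  · intro A B hAB
    rw [hQS A, hQS B]
    exact ENNReal.toReal_le_toReal (measure_ne_top μ _) (measure_ne_top μ _)
      |>.2 (measure_mono (hmono A B hAB)) |>.trans_eq rfl
  · intro A B e hAB _
    -- S (insert e C) = T ∪ S C where T = {U 0 < U e.succ}
    set T : Set Ω := {ω | U 0 ω < U e.succ ω} with hT
    have hTmeas : MeasurableSet T := measurableSet_lt (hU 0) (hU e.succ)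
    have hins : ∀ C : Finset (Fin n), S (insert e C) = S C ∪ T := by
      intro C; ext ω
      simp only [hS, hT, Set.mem_setOf_eq, Set.mem_union, Finset.mem_insert]
      constructor
      · rintro ⟨i, rfl | hiC, hi⟩
        · exact Or.inr hi
        · exact Or.inl ⟨i, hiC, hi⟩
      · rintro (⟨i, hiC, hi⟩ | hT)
        · exact ⟨i, Or.inr hiC, hi⟩
        · exact ⟨e, Or.inl rfl, hT⟩
    have hdiff : ∀ C : Finset (Fin n),
        Q (insert e C) - Q C = (μ (T \ S C)).toReal := by
      intro C
      rw [hQS, hQS, hins C]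
      have hm : μ (S C ∪ T) = μ (S C) + μ (T \ S C) := by
        rw [← Set.union_diff_self,
          measure_union Set.disjoint_sdiff_right (hTmeas.diff (hSmeas C))]
      rw [hm, ENNReal.toReal_add (measure_ne_top μ _) (measure_ne_top μ _)]
      ring
    rw [hdiff A, hdiff B]
    exact (ENNReal.toReal_le_toReal (measure_ne_top μ _) (measure_ne_top μ _)).2
      (measure_mono (Set.diff_subset_diff_right (hmono A B hAB)))
end
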